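/- Let k ≥ 0 and ℓ ≥ 1 be integers, let β be a composition, and set n = 1 + |β| + ℓ. Let A be the set of ∘-decorated Dyck paths (D,S) of size n with α^Rise(D,S) = (1, β), peak_∘(D,S) = k, rise_∘(D,S) = ℓ, such that row 1 of D is a double rise and 1 ∈ S, and let B be the set of ∘-decorated Dyck paths (D',S') of size n − 1 with α^Rise(D',S') = (β, 1), peak_∘(D',S') = k, and rise_∘(D',S') = ℓ − 1. Then there exists a bijection Φ : A → B such that for every (D,S) ∈ A, dinv_∘(D,S) = dinv_∘(Φ(D,S)) + ℓ(β) and area_∘(D,S) = area_∘(Φ(D,S)). -/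

import Mathlib

open Finset

namespace DeltaCat

/-- `i`-th entry (0-indexed) of an area sequence, defaulting to `0`. -/
def ent (l : List ℕ) (i : ℕ) : ℕ := l.getD i 0

/-- `l` is the area sequence of a Dyck path (of size `l.length ≥ 1`): it is nonempty,
starts with `0`, and consecutive entries increase by at most one. -/
def IsDyck (l : List ℕ) : Prop :=
  l ≠ [] ∧ ent l 0 = 0 ∧ ∀ i < l.length, i + 1 < l.length → ent l (i + 1) ≤ ent l i + 1

instance (l : List ℕ) : Decidable (IsDyck l) := by unfold IsDyck; infer_instance

/-- the area of a Dyck path -/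
def area (l : List ℕ) : ℕ := l.sum

/-- the diagonal inversions of a Dyck path: pairs `(i,j)`, `i < j`, with
`a_i = a_j` or `a_i = a_j + 1` (0-indexed rows). -/
def dinvPairs (l : List ℕ) : Finset (ℕ × ℕ) :=
  (Finset.range l.length ×ˢ Finset.range l.length).filter
    (fun p => p.1 < p.2 ∧ (ent l p.1 = ent l p.2 ∨ ent l p.1 = ent l p.2 + 1))

/-- the number of diagonal inversions -/
def dinv (l : List ℕ) : ℕ := (dinvPairs l).card

/-- `b'(k) = #{j > k : a_j = a_k} + #{j < k : a_j = a_k + 1}` (0-indexed rows). -/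
def bval (l : List ℕ) (k : ℕ) : ℕ :=
  ((Finset.range l.length).filter (fun j => k < j ∧ ent l j = ent l k)).card +
  ((Finset.range l.length).filter (fun j => j < k ∧ ent l j = ent l k + 1)).card

/-- row `i` (0-indexed) is a double rise -/
def IsRise (l : List ℕ) (i : ℕ) : Prop := i + 1 < l.length ∧ ent l (i + 1) = ent l i + 1

instance (l : List ℕ) (i : ℕ) : Decidable (IsRise l i) := by unfold IsRise; infer_instance

/-- row `i` (0-indexed) is a peak -/
def IsPeak (l : List ℕ) (i : ℕ) : Prop := i < l.length ∧ ¬ IsRise l i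

instance (l : List ℕ) (i : ℕ) : Decidable (IsPeak l i) := by unfold IsPeak; infer_instance

/-- `Rise_∘(D,S)`: the decorated rows which are double rises -/
def riseSet (l : List ℕ) (S : Finset ℕ) : Finset ℕ := S.filter (fun i => IsRise l i)

/-- `Peak_∘(D,S)`: the decorated rows which are peaks -/
def peakSet (l : List ℕ) (S : Finset ℕ) : Finset ℕ := S.filter (fun i => IsPeak l i)

/-- `area_∘(D,S)` -/
def areaC (l : List ℕ) (S : Finset ℕ) : ℕ := area l - ∑ i ∈ riseSet l S, ent l (i + 1)

/-- `dinv_∘(D,S)` -/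
def dinvC (l : List ℕ) (S : Finset ℕ) : ℕ := dinv l - ∑ i ∈ peakSet l S, bval l i

/-- the largest row index (0-indexed) attaining the maximal area value -/
def lastMaxRow (l : List ℕ) : ℕ :=
  ((Finset.range l.length).filter
    (fun i => ∀ j ∈ Finset.range l.length, ent l j ≤ ent l i)).sup id

/-- `S` is a valid set of ∘-decorations on the rows of `l` : a set of rows not containing
the largest index attaining the maximal area value. -/
def ValidDec (l : List ℕ) (S : Finset ℕ) : Prop :=
  (∀ i ∈ S, i < l.length) ∧ lastMaxRow l ∉ S

instance (l : List ℕ) (S : Finset ℕ) : Decidable (ValidDec l S) := by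
  unfold ValidDec; infer_instance

/-- the (0-indexed) rows where the path touches the diagonal, i.e. the starts of segments -/
def segStarts (l : List ℕ) : List ℕ :=
  (List.range l.length).filter (fun i => ent l i == 0)

/-- the touch composition of a Dyck path: the list of lengths of the maximal segments -/
def touchComp (l : List ℕ) : List ℕ :=
  List.zipWith (fun cur next => next - cur) (segStarts l) ((segStarts l).drop 1 ++ [l.length])

/-- the rise-touch composition `α^Rise(D,S)`: the touch composition with the number of
decorated double rises in each segment subtracted from the corresponding part. -/
def riseTouch (l : List ℕ) (S : Finset ℕ) : List ℕ :=
  List.zipWith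
    (fun cur next => (next - cur) - ((riseSet l S).filter (fun i => cur ≤ i ∧ i < next)).card)
    (segStarts l) ((segStarts l).drop 1 ++ [l.length])

/-- all lists of length `n` with entries at most `n`; this contains every Dyck path
area sequence of size `n`. -/
def allSeqs (n : ℕ) : Finset (List ℕ) :=
  (Finset.univ : Finset (Fin n → Fin (n + 1))).image fun v => (List.ofFn v).map Fin.val

/-- the Finset of all Dyck paths of size `n` (encoded by their area sequences) -/
def dyckPaths (n : ℕ) : Finset (List ℕ) := (allSeqs n).filter IsDyck

/-- the Finset of all ∘-decorated Dyck paths of size `n` -/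
def decPaths (n : ℕ) : Finset (List ℕ × Finset ℕ) :=
  ((allSeqs n) ×ˢ (Finset.range n).powerset).filter fun p => IsDyck p.1 ∧ ValidDec p.1 p.2

/-- `Cat^Rise_{α,k,ℓ}(q,t)`, the generating function of ∘-decorated Dyck paths of size
`|α| + ℓ` with `k` decorated peaks, `ℓ` decorated double rises and rise-touch composition
`α`, by the statistics `dinv_∘` and `area_∘`; it is `0` when `k < 0` or `ℓ < 0`. -/
def CatRise {R : Type*} [CommRing R] (q t : R) (α : List ℕ) (k ℓ : ℤ) : R :=
  if 0 ≤ k ∧ 0 ≤ ℓ then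
    ∑ p ∈ (decPaths (α.sum + ℓ.toNat)).filter
        (fun p => (peakSet p.1 p.2).card = k.toNat ∧ (riseSet p.1 p.2).card = ℓ.toNat ∧
          riseTouch p.1 p.2 = α),
      q ^ dinvC p.1 p.2 * t ^ areaC p.1 p.2
  else 0

section Basic

lemma ent_append_left (u v : List ℕ) (i : ℕ) (h : i < u.length) : ent (u ++ v) i = ent u i :=
  List.getD_append _ _ _ _ h

lemma ent_append_right (u v : List ℕ) (i : ℕ) (h : u.length ≤ i) :
    ent (u ++ v) i = ent v (i - u.length) := List.getD_append_right _ _ _ _ h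

lemma ent_range (m i : ℕ) (h : i < m) : ent (List.range m) i = i := by
  rw [ent, List.getD_eq_getElem _ _ (by simpa using h)]
  simp

lemma ent_default (l : List ℕ) (i : ℕ) (h : l.length ≤ i) : ent l i = 0 :=
  List.getD_eq_default _ _ h

lemma mem_allSeqs {n : ℕ} {l : List ℕ} :
    l ∈ allSeqs n ↔ l.length = n ∧ ∀ i, i < n → ent l i ≤ n := by
  constructor
  · intro h
    simp only [allSeqs, Finset.mem_image] at h
    obtain ⟨v, -, rfl⟩ := h
    refine ⟨by simp, fun i hi => ?_⟩
    rw [ent, List.getD_eq_getElem _ _ (by simpa using hi)]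
    simp only [List.getElem_map, List.getElem_ofFn]
    exact Nat.lt_succ_iff.mp (v _).isLt
  · rintro ⟨hlen, hent⟩
    simp only [allSeqs, Finset.mem_image]
    refine ⟨fun i => ⟨ent l i, Nat.lt_succ_of_le (hent i (hlen ▸ i.isLt))⟩, Finset.mem_univ _, ?_⟩
    apply List.ext_getElem (by simp [hlen])
    intro i h1 h2
    simp only [List.getElem_map, List.getElem_ofFn]
    rw [ent, List.getD_eq_getElem _ _ h2]

lemma IsDyck.ent_le {l : List ℕ} (h : IsDyck l) : ∀ i, i < l.length → ent l i ≤ i := by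
  intro i
  induction i with
  | zero => intro _; simp [h.2.1]
  | succ i ih =>
    intro hi
    have h1 : i < l.length := Nat.lt_of_succ_lt hi
    have := h.2.2 i h1 hi
    have := ih h1
    omega

lemma sup_id_mem {s : Finset ℕ} (h : s.Nonempty) : s.sup id ∈ s := by
  have : s.sup id = s.max' h := by rw [Finset.max'_eq_sup', Finset.sup'_eq_sup]
  rw [this]; exact s.max'_mem h

lemma lastMaxRow_spec {l : List ℕ} (h : l ≠ []) :
    lastMaxRow l < l.length ∧ (∀ j, j < l.length → ent l j ≤ ent l (lastMaxRow l)) ∧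
      (∀ j, lastMaxRow l < j → j < l.length → ent l j < ent l (lastMaxRow l)) := by
  classical
  set s := (Finset.range l.length).filter
      (fun i => ∀ j ∈ Finset.range l.length, ent l j ≤ ent l i) with hs
  have hne : s.Nonempty := by
    obtain ⟨b, hb, hmax⟩ := Finset.exists_max_image (Finset.range l.length) (ent l)
      ⟨0, by simp [List.length_pos_iff.2 h]⟩
    exact ⟨b, Finset.mem_filter.2 ⟨hb, fun j hj => hmax j hj⟩⟩
  have hmem : lastMaxRow l ∈ s := sup_id_mem hne
  rw [hs, Finset.mem_filter, Finset.mem_range] at hmem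
  refine ⟨hmem.1, fun j hj => hmem.2 j (Finset.mem_range.2 hj), ?_⟩
  intro j hj1 hj2
  rcases Nat.lt_or_ge (ent l j) (ent l (lastMaxRow l)) with h' | h'
  · exact h'
  · exfalso
    have hje : ent l j = ent l (lastMaxRow l) :=
      le_antisymm (hmem.2 j (Finset.mem_range.2 hj2)) h'
    have : j ∈ s := by
      rw [hs, Finset.mem_filter, Finset.mem_range]
      exact ⟨hj2, fun j' hj' => hje ▸ hmem.2 j' hj'⟩
    have : j ≤ lastMaxRow l := Finset.le_sup (f := id) this
    omega

lemma lastMaxRow_eq {l : List ℕ} {k : ℕ} (h : l ≠ []) (h1 : k < l.length)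
    (h2 : ∀ j, j < l.length → ent l j ≤ ent l k)
    (h3 : ∀ j, k < j → j < l.length → ent l j < ent l k) : lastMaxRow l = k := by
  obtain ⟨s1, s2, s3⟩ := lastMaxRow_spec h
  rcases lt_trichotomy (lastMaxRow l) k with hlt | heq | hgt
  · have a1 := s3 k hlt h1
    have a2 := h2 _ s1
    omega
  · exact heq
  · have a1 := h3 _ hgt s1
    have a2 := s2 _ h1
    omega

lemma card_filter_range_add (a b : ℕ) (p : ℕ → Prop) [DecidablePred p] :
    ((Finset.range (a + b)).filter p).card =
      ((Finset.range a).filter p).card + ((Finset.range b).filter (fun j => p (a + j))).card := by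
  rw [Finset.range_add, Finset.filter_union,
    Finset.card_union_of_disjoint (by
      apply Finset.disjoint_filter_filter
      rw [Finset.disjoint_left]
      intro x hx hx'
      rw [Finset.mem_range] at hx
      rw [Finset.mem_map] at hx'
      obtain ⟨j, -, hj⟩ := hx'
      simp only [addLeftEmbedding_apply] at hj
      omega),
    Finset.filter_map, Finset.card_map]
  rfl

lemma dinv_eq_sum_bval (l : List ℕ) :
    dinv l = ∑ k ∈ Finset.range l.length, bval l k := by
  classical
  rw [dinv, Finset.card_eq_sum_card_fiberwise
    (f := fun p => if ent l p.1 = ent l p.2 then p.1 else p.2) (t := Finset.range l.length)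
    (fun p hp => by
      simp only [Finset.mem_coe, dinvPairs, Finset.mem_filter, Finset.mem_product, Finset.mem_range] at hp ⊢
      split <;> [exact hp.1.1; exact hp.1.2])]
  apply Finset.sum_congr rfl
  intro k hk
  rw [Finset.mem_range] at hk
  rw [bval]
  have himg : (dinvPairs l).filter (fun p => (if ent l p.1 = ent l p.2 then p.1 else p.2) = k) =
      ((Finset.range l.length).filter (fun j => k < j ∧ ent l j = ent l k)).image (fun j => (k, j))
      ∪ ((Finset.range l.length).filter (fun j => j < k ∧ ent l j = ent l k + 1)).image
          (fun j => (j, k)) := by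
    ext p
    simp only [dinvPairs, Finset.mem_filter, Finset.mem_product, Finset.mem_range,
      Finset.mem_union, Finset.mem_image]
    constructor
    · rintro ⟨⟨⟨hp1, hp2⟩, hlt, hor⟩, hk⟩
      by_cases he : ent l p.1 = ent l p.2
      · simp only [he, if_pos] at hk
        subst hk
        exact Or.inl ⟨p.2, ⟨hp2, hlt, he.symm⟩, rfl⟩
      · rw [if_neg he] at hk
        subst hk
        rcases hor with h' | h'
        · exact absurd h' he
        · exact Or.inr ⟨p.1, ⟨hp1, hlt, h'⟩, rfl⟩
    · rintro (⟨j, ⟨hj1, hj2, hj3⟩, rfl⟩ | ⟨j, ⟨hj1, hj2, hj3⟩, rfl⟩)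
      · refine ⟨⟨⟨by omega, hj1⟩, hj2, Or.inl hj3.symm⟩, ?_⟩
        simp [hj3]
      · refine ⟨⟨⟨hj1, hk⟩, hj2, Or.inr hj3⟩, ?_⟩
        have : ¬ ent l j = ent l k := by omega
        simp [this]
  rw [himg, Finset.card_union_of_disjoint, Finset.card_image_of_injective _ (by
      intro a b hab; exact (Prod.mk.injEq _ _ _ _).mp hab |>.2),
    Finset.card_image_of_injective _ (by
      intro a b hab; exact (Prod.mk.injEq _ _ _ _).mp hab |>.1)]
  rw [Finset.disjoint_left]
  rintro p hp hp'
  simp only [Finset.mem_image, Finset.mem_filter] at hp hp'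
  obtain ⟨j, ⟨-, hj, -⟩, rfl⟩ := hp
  obtain ⟨j', ⟨-, hj', -⟩, h⟩ := hp'
  rw [Prod.mk.injEq] at h
  omega

end Basic
section Forms

/-- the rotated path `Q` built from rest `r` and chunk size `m` -/
def Ql (m : ℕ) (r : List ℕ) : List ℕ := r ++ List.range (m - 1)

/-- the original path `P` -/
def Pl (m : ℕ) (r : List ℕ) : List ℕ := List.range m ++ r

/-- decorations of `P` -/
def PS (m : ℕ) (T : Finset ℕ) (c : Bool) : Finset ℕ :=
  Finset.range (m - 1) ∪ (if c then {m - 1} else ∅) ∪ T.image (m + ·)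

/-- decorations of `Q` -/
def QS (rl m : ℕ) (T : Finset ℕ) (c : Bool) : Finset ℕ :=
  T ∪ (Finset.range (m - 2)).image (rl + ·) ∪ (if c then {rl + (m - 2)} else ∅)

/-- `r` is a possible "rest" : empty or an area sequence with valid steps -/
def GoodRest (r : List ℕ) : Prop :=
  (r ≠ [] → ent r 0 = 0) ∧ ∀ i, i + 1 < r.length → ent r (i + 1) ≤ ent r i + 1

variable {m : ℕ} {r : List ℕ} {T : Finset ℕ} {c : Bool}

lemma Pl_length : (Pl m r).length = m + r.length := by simp [Pl]

lemma Ql_length : (Ql m r).length = r.length + (m - 1) := by simp [Ql]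

lemma mem_PS {i : ℕ} (hm : 2 ≤ m) :
    i ∈ PS m T c ↔ (i < m - 1) ∨ (c = true ∧ i = m - 1) ∨ (∃ j ∈ T, i = m + j) := by
  simp only [PS, Finset.mem_union, Finset.mem_range, Finset.mem_image]
  constructor
  · rintro ((h | h) | ⟨j, hj, rfl⟩)
    · exact Or.inl h
    · rcases c with _ | _
      · simp at h
      · simp at h
        exact Or.inr (Or.inl ⟨rfl, h⟩)
    · exact Or.inr (Or.inr ⟨j, hj, rfl⟩)
  · rintro (h | ⟨hc, rfl⟩ | ⟨j, hj, rfl⟩)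
    · exact Or.inl (Or.inl h)
    · subst hc; simp
    · exact Or.inr ⟨j, hj, rfl⟩

lemma mem_QS {rl i : ℕ} (hm : 2 ≤ m) :
    i ∈ QS rl m T c ↔ i ∈ T ∨ (∃ j < m - 2, i = rl + j) ∨ (c = true ∧ i = rl + (m - 2)) := by
  simp only [QS, Finset.mem_union, Finset.mem_range, Finset.mem_image]
  constructor
  · rintro ((h | ⟨j, hj, rfl⟩) | h)
    · exact Or.inl h
    · exact Or.inr (Or.inl ⟨j, hj, rfl⟩)
    · rcases c with _ | _
      · simp at h
      · simp at h
        exact Or.inr (Or.inr ⟨rfl, h⟩)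
  · rintro (h | ⟨j, hj, rfl⟩ | ⟨hc, rfl⟩)
    · exact Or.inl (Or.inl h)
    · exact Or.inl (Or.inr ⟨j, hj, rfl⟩)
    · subst hc; simp

lemma entPl {i : ℕ} (h : i < m) : ent (Pl m r) i = i := by
  rw [Pl, ent_append_left _ _ _ (by simpa using h)]
  exact ent_range _ _ h

lemma entPl' (j : ℕ) : ent (Pl m r) (m + j) = ent r j := by
  rw [Pl, ent_append_right _ _ _ (by simp)]
  simp

lemma entQl {i : ℕ} (h : i < r.length) : ent (Ql m r) i = ent r i := by
  rw [Ql, ent_append_left _ _ _ h]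

lemma entQl' {j : ℕ} (h : j < m - 1) : ent (Ql m r) (r.length + j) = j := by
  rw [Ql, ent_append_right _ _ _ (by omega)]
  simp only [Nat.add_sub_cancel_left]
  exact ent_range _ _ h

lemma risePl_low {i : ℕ} (hm : 2 ≤ m) (h : i < m - 1) : IsRise (Pl m r) i := by
  refine ⟨by rw [Pl_length]; omega, ?_⟩
  rw [entPl (by omega), entPl (by omega)]

lemma risePl_top (hm : 2 ≤ m) (hGr : GoodRest r) : ¬ IsRise (Pl m r) (m - 1) := by
  rintro ⟨h1, h2⟩
  rw [Pl_length] at h1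
  have hmm : m - 1 + 1 = m + 0 := by omega
  rw [hmm, entPl'] at h2
  rw [entPl (by omega)] at h2
  have : ent r 0 = 0 := by
    rcases Nat.eq_zero_or_pos r.length with h | h
    · exact ent_default _ _ (by omega)
    · exact hGr.1 (by intro he; rw [he] at h; simp at h)
  omega

lemma risePl_hi (hGr : GoodRest r) (j : ℕ) : IsRise (Pl m r) (m + j) ↔ IsRise r j := by
  unfold IsRise
  rw [Pl_length]
  constructor
  · rintro ⟨h1, h2⟩
    have hj : j + 1 < r.length := by omega
    rw [show m + j + 1 = m + (j+1) from rfl, entPl', entPl'] at h2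
    exact ⟨hj, h2⟩
  · rintro ⟨h1, h2⟩
    refine ⟨by omega, ?_⟩
    rw [show m + j + 1 = m + (j+1) from rfl, entPl', entPl']
    exact h2

lemma riseQl_low (hm : 2 ≤ m) {j : ℕ} (h : j < r.length) :
    IsRise (Ql m r) j ↔ IsRise r j := by
  unfold IsRise
  rw [Ql_length]
  constructor
  · rintro ⟨h1, h2⟩
    rcases Nat.lt_or_ge (j+1) r.length with hj | hj
    · rw [entQl hj, entQl h] at h2
      exact ⟨hj, h2⟩
    · exfalso
      have hj1 : j + 1 = r.length := by omega
      have : ent (Ql m r) (j+1) = 0 := by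
        rw [hj1, show r.length = r.length + 0 from rfl, entQl' (by omega)]
      rw [this, entQl h] at h2
      omega
  · rintro ⟨h1, h2⟩
    refine ⟨by omega, ?_⟩
    rw [entQl h1, entQl h]
    exact h2

lemma riseQl_mid (hm : 2 ≤ m) {i : ℕ} (h : i < m - 2) : IsRise (Ql m r) (r.length + i) := by
  refine ⟨by rw [Ql_length]; omega, ?_⟩
  rw [show r.length + i + 1 = r.length + (i+1) from rfl, entQl' (by omega), entQl' (by omega)]

lemma riseQl_top (hm : 2 ≤ m) : ¬ IsRise (Ql m r) (r.length + (m - 2)) := by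
  rintro ⟨h1, -⟩
  rw [Ql_length] at h1
  omega

lemma riseSet_Pl (hm : 2 ≤ m) (hGr : GoodRest r) (hT : ∀ i ∈ T, i < r.length) :
    riseSet (Pl m r) (PS m T c) = Finset.range (m - 1) ∪ (riseSet r T).image (m + ·) := by
  ext i
  simp only [riseSet, Finset.mem_filter, Finset.mem_union, Finset.mem_range, Finset.mem_image,
    mem_PS hm]
  constructor
  · rintro ⟨(h | ⟨hc, rfl⟩ | ⟨j, hj, rfl⟩), hrise⟩
    · exact Or.inl h
    · exact absurd hrise (risePl_top hm hGr)
    · exact Or.inr ⟨j, ⟨hj, (risePl_hi hGr j).mp hrise⟩, rfl⟩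
  · rintro (h | ⟨j, ⟨hj1, hj2⟩, rfl⟩)
    · exact ⟨Or.inl h, risePl_low hm h⟩
    · exact ⟨Or.inr (Or.inr ⟨j, hj1, rfl⟩), (risePl_hi hGr j).mpr hj2⟩

lemma peakSet_Pl (hm : 2 ≤ m) (hGr : GoodRest r) (hT : ∀ i ∈ T, i < r.length) :
    peakSet (Pl m r) (PS m T c) =
      (if c then {m - 1} else ∅) ∪ (peakSet r T).image (m + ·) := by
  ext i
  simp only [peakSet, Finset.mem_filter, Finset.mem_union, Finset.mem_image, mem_PS hm]
  simp only [IsPeak]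
  constructor
  · rintro ⟨(h | ⟨hc, rfl⟩ | ⟨j, hj, rfl⟩), hpk⟩
    · exact absurd (risePl_low hm h) hpk.2
    · subst hc; simp
    · refine Or.inr ⟨j, ⟨hj, hT j hj, fun hr => hpk.2 ((risePl_hi hGr j).mpr hr)⟩, rfl⟩
  · intro h
    rcases c with _ | _
    · simp only [Bool.false_eq_true, if_false, Finset.notMem_empty, false_or] at h
      obtain ⟨j, ⟨hj1, hj2, hj3⟩, rfl⟩ := h
      exact ⟨Or.inr (Or.inr ⟨j, hj1, rfl⟩),
        ⟨by rw [Pl_length]; have := hT j hj1; omega, fun hr => hj3 ((risePl_hi hGr j).mp hr)⟩⟩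
    · simp only [if_true, Finset.mem_singleton] at h
      rcases h with rfl | ⟨j, ⟨hj1, hj2, hj3⟩, rfl⟩
      · exact ⟨Or.inr (Or.inl ⟨rfl, rfl⟩),
          ⟨by rw [Pl_length]; omega, risePl_top hm hGr⟩⟩
      · exact ⟨Or.inr (Or.inr ⟨j, hj1, rfl⟩),
          ⟨by rw [Pl_length]; have := hT j hj1; omega, fun hr => hj3 ((risePl_hi hGr j).mp hr)⟩⟩

lemma riseSet_Ql (hm : 2 ≤ m) (hT : ∀ i ∈ T, i < r.length) :
    riseSet (Ql m r) (QS r.length m T c) =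
      riseSet r T ∪ (Finset.range (m - 2)).image (r.length + ·) := by
  ext i
  simp only [riseSet, Finset.mem_filter, Finset.mem_union, Finset.mem_range, Finset.mem_image,
    mem_QS hm]
  constructor
  · rintro ⟨(h | ⟨j, hj, rfl⟩ | ⟨hc, rfl⟩), hrise⟩
    · exact Or.inl ⟨h, (riseQl_low hm (hT i h)).mp hrise⟩
    · exact Or.inr ⟨j, hj, rfl⟩
    · exact absurd hrise (riseQl_top hm)
  · rintro (⟨h1, h2⟩ | ⟨j, hj, rfl⟩)
    · exact ⟨Or.inl h1, (riseQl_low hm (hT i h1)).mpr h2⟩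
    · exact ⟨Or.inr (Or.inl ⟨j, hj, rfl⟩), riseQl_mid hm hj⟩

lemma peakSet_Ql (hm : 2 ≤ m) (hT : ∀ i ∈ T, i < r.length) :
    peakSet (Ql m r) (QS r.length m T c) =
      peakSet r T ∪ (if c then {r.length + (m - 2)} else ∅) := by
  ext i
  simp only [peakSet, Finset.mem_filter, Finset.mem_union, Finset.mem_image, mem_QS hm]
  simp only [IsPeak]
  constructor
  · rintro ⟨(h | ⟨j, hj, rfl⟩ | ⟨hc, rfl⟩), hpk⟩
    · exact Or.inl ⟨h, hT i h, fun hr => hpk.2 ((riseQl_low hm (hT i h)).mpr hr)⟩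
    · exact absurd (riseQl_mid hm hj) hpk.2
    · subst hc; simp
  · intro h
    have hQlen : (Ql m r).length = r.length + (m - 1) := Ql_length
    rcases c with _ | _
    · simp only [Bool.false_eq_true, if_false, Finset.notMem_empty, or_false] at h
      obtain ⟨h1, h2, h3⟩ := h
      exact ⟨Or.inl h1, ⟨by omega, fun hr => h3 ((riseQl_low hm h2).mp hr)⟩⟩
    · simp only [if_true, Finset.mem_singleton] at h
      rcases h with ⟨h1, h2, h3⟩ | rfl
      · exact ⟨Or.inl h1, ⟨by omega, fun hr => h3 ((riseQl_low hm h2).mp hr)⟩⟩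
      · exact ⟨Or.inr (Or.inr ⟨rfl, rfl⟩), ⟨by omega, riseQl_top hm⟩⟩

lemma card_riseSet_Pl (hm : 2 ≤ m) (hGr : GoodRest r) (hT : ∀ i ∈ T, i < r.length) :
    (riseSet (Pl m r) (PS m T c)).card = (m - 1) + (riseSet r T).card := by
  rw [riseSet_Pl hm hGr hT, Finset.card_union_of_disjoint, Finset.card_range,
    Finset.card_image_of_injective _ (fun a b h => by omega)]
  rw [Finset.disjoint_left]
  rintro x hx hx'
  rw [Finset.mem_range] at hx
  obtain ⟨j, -, rfl⟩ := Finset.mem_image.mp hx'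
  omega

lemma card_riseSet_Ql (hm : 2 ≤ m) (hT : ∀ i ∈ T, i < r.length) :
    (riseSet (Ql m r) (QS r.length m T c)).card = (riseSet r T).card + (m - 2) := by
  rw [riseSet_Ql hm hT, Finset.card_union_of_disjoint, Finset.card_image_of_injective _
    (fun a b h => by omega), Finset.card_range]
  rw [Finset.disjoint_left]
  rintro x hx hx'
  have : x < r.length := hT x (Finset.mem_filter.mp hx).1
  obtain ⟨j, -, rfl⟩ := Finset.mem_image.mp hx'
  omega

lemma card_peakSet_eq (hm : 2 ≤ m) (hGr : GoodRest r) (hT : ∀ i ∈ T, i < r.length) :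
    (peakSet (Pl m r) (PS m T c)).card = (peakSet (Ql m r) (QS r.length m T c)).card := by
  rw [peakSet_Pl hm hGr hT, peakSet_Ql hm hT, Finset.card_union_of_disjoint,
    Finset.card_union_of_disjoint, Finset.card_image_of_injective _ (fun a b h => by omega)]
  · rcases c with _ | _ <;> simp [Nat.add_comm]
  · rw [Finset.disjoint_right]
    rintro x hx hx'
    rcases c with _ | _
    · simp at hx
    · simp only [if_true, Finset.mem_singleton] at hx
      subst hx
      have := hT _ (Finset.mem_filter.mp hx').1
      omega
  · rw [Finset.disjoint_left]
    rintro x hx hx'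
    rcases c with _ | _
    · simp at hx
    · simp only [if_true, Finset.mem_singleton] at hx
      subst hx
      obtain ⟨j, hj, hje⟩ := Finset.mem_image.mp hx'
      have := hT _ (Finset.mem_filter.mp hj).1
      omega

end Forms
section Seg

variable {m : ℕ} {r : List ℕ} {T : Finset ℕ} {c : Bool}

lemma mem_segStarts {l : List ℕ} {i : ℕ} : i ∈ segStarts l ↔ i < l.length ∧ ent l i = 0 := by
  simp [segStarts, List.mem_filter, List.mem_range]

lemma segStarts_nil : segStarts [] = [] := rfl

lemma length_riseTouch (l : List ℕ) (S : Finset ℕ) :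
    (riseTouch l S).length = (segStarts l).length := by
  simp only [riseTouch, List.length_zipWith, List.length_append, List.length_drop,
    List.length_singleton]
  omega

lemma zipWith_congr_mem {f g : ℕ → ℕ → ℕ} :
    ∀ (xs ys : List ℕ), (∀ a ∈ xs, ∀ b ∈ ys, f a b = g a b) →
      List.zipWith f xs ys = List.zipWith g xs ys := by
  intro xs
  induction xs with
  | nil => intro ys _; simp
  | cons a xs ih =>
    intro ys h
    cases ys with
    | nil => simp
    | cons b ys =>
      simp only [List.zipWith_cons_cons]
      rw [h a (by simp) b (by simp), ih ys (fun a' ha' b' hb' =>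
        h a' (List.mem_cons_of_mem _ ha') b' (List.mem_cons_of_mem _ hb'))]

lemma filter_range_beq_zero {j : ℕ} (hj : 1 ≤ j) :
    (List.range j).filter (fun i => i == 0) = [0] := by
  obtain ⟨j', rfl⟩ : ∃ j', j = j' + 1 := ⟨j - 1, by omega⟩
  rw [List.range_succ_eq_map, List.filter_cons_of_pos (by simp), List.filter_map]
  have : ((fun i => i == 0) ∘ Nat.succ) = fun _ => false := by
    funext i; simp [Function.comp]
  rw [this]
  simp

lemma segStarts_Pl (hm : 2 ≤ m) :
    segStarts (Pl m r) = 0 :: (segStarts r).map (m + ·) := by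
  have e1 : List.filter (fun i => ent (Pl m r) i == 0) (List.range m) = [0] := by
    rw [List.filter_congr (q := fun i => i == 0) (fun i hi => by
      rw [entPl (List.mem_range.mp hi)]), filter_range_beq_zero (by omega)]
  have e2 : List.filter (fun i => ent (Pl m r) i == 0)
      (List.map (fun x => m + x) (List.range r.length)) =
      List.map (fun x => m + x) (segStarts r) := by
    rw [List.filter_map]
    have : ((fun i => ent (Pl m r) i == 0) ∘ (fun x => m + x)) = fun j => ent r j == 0 := by
      funext j
      simp only [Function.comp_apply]
      rw [entPl' (m := m) j]
    rw [this]
    rfl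
  rw [segStarts, Pl_length, List.range_add, List.filter_append, e1, e2]
  rfl

lemma segStarts_Ql (hm : 2 ≤ m) :
    segStarts (Ql m r) = segStarts r ++ [r.length] := by
  rw [segStarts, Ql_length, List.range_add, List.filter_append]
  congr 1
  · exact List.filter_congr (fun i hi => by rw [entQl (List.mem_range.mp hi)])
  · rw [List.filter_map, List.filter_congr (q := fun i => i == 0) (fun i hi => by
      simp only [Function.comp_apply]
      rw [entQl' (List.mem_range.mp hi)]), filter_range_beq_zero (by omega)]
    simp

lemma segStarts_cons (hGr : GoodRest r) (hne : r ≠ []) :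
    ∃ t, segStarts r = 0 :: t ∧ ∀ b ∈ t, b < r.length := by
  have hl : 1 ≤ r.length := List.length_pos_iff.2 hne
  have h1 : List.range r.length = 0 :: List.map Nat.succ (List.range (r.length - 1)) := by
    rw [← List.range_succ_eq_map]
    congr 1
    omega
  refine ⟨_, by rw [segStarts, h1, List.filter_cons_of_pos (by simp [hGr.1 hne])], ?_⟩
  intro b hb
  have : b ∈ segStarts r := by
    rw [segStarts, h1, List.filter_cons_of_pos (by simp [hGr.1 hne])]
    exact List.mem_cons_of_mem _ hb
  exact (mem_segStarts.mp this).1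

lemma cardRise_Pl_chunk (hm : 2 ≤ m) (hGr : GoodRest r) (hT : ∀ i ∈ T, i < r.length) :
    ((riseSet (Pl m r) (PS m T c)).filter (fun i => 0 ≤ i ∧ i < m)).card = m - 1 := by
  rw [riseSet_Pl hm hGr hT, Finset.filter_union]
  have e1 : (Finset.range (m - 1)).filter (fun i => 0 ≤ i ∧ i < m) = Finset.range (m - 1) :=
    Finset.filter_true_of_mem (fun x hx => by rw [Finset.mem_range] at hx; omega)
  have e2 : ((riseSet r T).image (m + ·)).filter (fun i => 0 ≤ i ∧ i < m) = ∅ := by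
    apply Finset.filter_false_of_mem
    intro x hx
    obtain ⟨j, -, rfl⟩ := Finset.mem_image.mp hx
    omega
  rw [e1, e2, Finset.union_empty, Finset.card_range]

lemma cardRise_Pl_shift (hm : 2 ≤ m) (hGr : GoodRest r) (hT : ∀ i ∈ T, i < r.length)
    (cur next : ℕ) :
    ((riseSet (Pl m r) (PS m T c)).filter (fun i => m + cur ≤ i ∧ i < m + next)).card =
      ((riseSet r T).filter (fun i => cur ≤ i ∧ i < next)).card := by
  rw [riseSet_Pl hm hGr hT, Finset.filter_union]
  have e1 : (Finset.range (m - 1)).filter (fun i => m + cur ≤ i ∧ i < m + next) = ∅ := by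
    apply Finset.filter_false_of_mem
    intro x hx
    rw [Finset.mem_range] at hx
    omega
  rw [e1, Finset.empty_union, Finset.filter_image]
  rw [Finset.card_image_of_injective _ (fun a b h => by omega)]
  congr 1
  apply Finset.filter_congr
  intro x _
  constructor <;> (intro h; constructor) <;> omega

lemma cardRise_Ql_rest (hm : 2 ≤ m) (hT : ∀ i ∈ T, i < r.length) {cur next : ℕ}
    (hnext : next ≤ r.length) :
    ((riseSet (Ql m r) (QS r.length m T c)).filter (fun i => cur ≤ i ∧ i < next)).card =
      ((riseSet r T).filter (fun i => cur ≤ i ∧ i < next)).card := by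
  rw [riseSet_Ql hm hT, Finset.filter_union]
  have e1 : ((Finset.range (m - 2)).image (r.length + ·)).filter
      (fun i => cur ≤ i ∧ i < next) = ∅ := by
    apply Finset.filter_false_of_mem
    intro x hx
    obtain ⟨j, -, rfl⟩ := Finset.mem_image.mp hx
    omega
  rw [e1, Finset.union_empty]

lemma cardRise_Ql_chunk (hm : 2 ≤ m) (hT : ∀ i ∈ T, i < r.length) :
    ((riseSet (Ql m r) (QS r.length m T c)).filter
      (fun i => r.length ≤ i ∧ i < r.length + (m - 1))).card = m - 2 := by
  rw [riseSet_Ql hm hT, Finset.filter_union]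
  have e1 : (riseSet r T).filter (fun i => r.length ≤ i ∧ i < r.length + (m - 1)) = ∅ := by
    apply Finset.filter_false_of_mem
    intro x hx
    have : x < r.length := hT x (Finset.mem_filter.mp hx).1
    omega
  have e2 : ((Finset.range (m - 2)).image (r.length + ·)).filter
      (fun i => r.length ≤ i ∧ i < r.length + (m - 1)) =
      (Finset.range (m - 2)).image (r.length + ·) := by
    apply Finset.filter_true_of_mem
    intro x hx
    obtain ⟨j, hj, rfl⟩ := Finset.mem_image.mp hx
    rw [Finset.mem_range] at hj
    omega
  rw [e1, e2, Finset.empty_union, Finset.card_image_of_injective _ (fun a b h => by omega),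
    Finset.card_range]

lemma riseTouch_Pl (hm : 2 ≤ m) (hGr : GoodRest r) (hT : ∀ i ∈ T, i < r.length) :
    riseTouch (Pl m r) (PS m T c) = 1 :: riseTouch r T := by
  rw [riseTouch, segStarts_Pl hm, Pl_length]
  rcases eq_or_ne r [] with rfl | hne
  · rw [segStarts_nil]
    simp only [List.map_nil, List.drop_succ_cons, List.drop_nil, List.nil_append,
      List.length_nil, Nat.add_zero, List.zipWith_cons_cons, List.zipWith_nil_right,
      riseTouch, segStarts_nil, List.zipWith_nil_left]
    have := cardRise_Pl_chunk (r := []) (T := T) (c := c) hm hGr hT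
    rw [Nat.sub_zero]
    congr 1
    have h2 : (fun i => 0 ≤ i ∧ i < m) = (fun i => m * 0 ≤ i ∧ i < m) := by
      funext i; simp
    omega
  · obtain ⟨t, ht, htmem⟩ := segStarts_cons hGr hne
    rw [ht]
    simp only [List.map_cons, Nat.add_zero, List.drop_succ_cons, List.drop_zero,
      List.cons_append, List.zipWith_cons_cons]
    congr 1
    · have := cardRise_Pl_chunk (m := m) (r := r) (T := T) (c := c) hm hGr hT
      omega
    · have h1 : (m :: List.map (fun x => m + x) t) = List.map (fun x => m + x) (0 :: t) := by
        simp
      have h2 : (List.map (fun x => m + x) t ++ [m + r.length]) =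
          List.map (fun x => m + x) (t ++ [r.length]) := by simp
      rw [h1, h2, List.zipWith_map]
      rw [riseTouch, ht, List.drop_succ_cons, List.drop_zero]
      apply zipWith_congr_mem
      intro a _ b _
      rw [cardRise_Pl_shift hm hGr hT a b]
      omega

lemma riseTouch_Ql (hm : 2 ≤ m) (hGr : GoodRest r) (hT : ∀ i ∈ T, i < r.length) :
    riseTouch (Ql m r) (QS r.length m T c) = riseTouch r T ++ [1] := by
  rw [riseTouch, segStarts_Ql hm, Ql_length]
  rcases eq_or_ne r [] with rfl | hne
  · rw [segStarts_nil]
    simp only [List.nil_append, List.length_nil, List.drop_succ_cons, List.drop_nil,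
      List.zipWith_cons_cons, List.zipWith_nil_right, riseTouch, segStarts_nil,
      List.zipWith_nil_left, Nat.zero_add]
    have := cardRise_Ql_chunk (r := []) (T := T) (c := c) hm hT
    simp only [List.length_nil, Nat.zero_add] at this
    have h2 : (fun i => 0 ≤ i ∧ i < m - 1) = (fun i => 0 ≤ i ∧ i < 0 + (m - 1)) := by
      funext i; rw [Nat.zero_add]
    rw [Nat.sub_zero]
    congr 1
    omega
  · obtain ⟨t, ht, htmem⟩ := segStarts_cons hGr hne
    rw [ht]
    have hd : ((0 :: t) ++ [r.length]).drop 1 ++ [r.length + (m - 1)] =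
        (t ++ [r.length]) ++ [r.length + (m - 1)] := by simp
    rw [hd, List.zipWith_append (by simp)]
    congr 1
    · rw [riseTouch, ht, List.drop_succ_cons, List.drop_zero]
      apply zipWith_congr_mem
      intro a _ b hb
      have hble : b ≤ r.length := by
        rcases List.mem_append.mp hb with h | h
        · exact le_of_lt (htmem b h)
        · simp at h; omega
      rw [cardRise_Ql_rest hm hT hble]
    · simp only [List.zipWith_cons_cons, List.zipWith_nil_right]
      rw [cardRise_Ql_chunk hm hT]
      congr 1
      omega

end Seg
section Area

variable {m : ℕ} {r : List ℕ} {T : Finset ℕ} {c : Bool}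

lemma list_range_sum (j : ℕ) : (List.range j).sum = ∑ i ∈ Finset.range j, i := by
  induction j with
  | zero => simp
  | succ j ih => rw [List.range_succ, List.sum_append, Finset.sum_range_succ, ih]; simp

lemma sum_succ_shift (j : ℕ) : ∑ i ∈ Finset.range j, (i + 1) = (List.range (j + 1)).sum := by
  rw [list_range_sum, Finset.sum_range_succ']
  simp

lemma riseSet_r_lt {j : ℕ} (hj : j ∈ riseSet r T) : j + 1 < r.length :=
  (Finset.mem_filter.mp hj).2.1

lemma areaC_PQ (hm : 2 ≤ m) (hGr : GoodRest r) (hT : ∀ i ∈ T, i < r.length) :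
    areaC (Pl m r) (PS m T c) = areaC (Ql m r) (QS r.length m T c) := by
  have hinj : ∀ a : ℕ, ∀ x ∈ riseSet r T, ∀ y ∈ riseSet r T, a + x = a + y → x = y := by
    intro a x _ y _ h; omega
  have hP : ∑ i ∈ riseSet (Pl m r) (PS m T c), ent (Pl m r) (i + 1) =
      (List.range m).sum + ∑ j ∈ riseSet r T, ent r (j + 1) := by
    rw [riseSet_Pl hm hGr hT, Finset.sum_union (by
      rw [Finset.disjoint_left]
      rintro x hx hx'
      rw [Finset.mem_range] at hx
      obtain ⟨j, -, rfl⟩ := Finset.mem_image.mp hx'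
      omega)]
    congr 1
    · rw [show (List.range m).sum = ∑ i ∈ Finset.range (m - 1), (i + 1) by
        rw [sum_succ_shift]; congr 2; omega]
      apply Finset.sum_congr rfl
      intro i hi
      rw [Finset.mem_range] at hi
      exact entPl (by omega)
    · rw [Finset.sum_image (hinj m)]
      apply Finset.sum_congr rfl
      intro j _
      rw [show m + j + 1 = m + (j + 1) from rfl, entPl']
  have hQ : ∑ i ∈ riseSet (Ql m r) (QS r.length m T c), ent (Ql m r) (i + 1) =
      ∑ j ∈ riseSet r T, ent r (j + 1) + (List.range (m - 1)).sum := by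
    rw [riseSet_Ql hm hT, Finset.sum_union (by
      rw [Finset.disjoint_left]
      rintro x hx hx'
      have : x < r.length := hT x (Finset.mem_filter.mp hx).1
      obtain ⟨j, -, rfl⟩ := Finset.mem_image.mp hx'
      omega)]
    congr 1
    · apply Finset.sum_congr rfl
      intro j hj
      exact entQl (riseSet_r_lt hj)
    · rw [Finset.sum_image (fun x _ y _ h => by omega : ∀ x ∈ Finset.range (m - 2),
        ∀ y ∈ Finset.range (m - 2), r.length + x = r.length + y → x = y)]
      rw [show (List.range (m - 1)).sum = ∑ i ∈ Finset.range (m - 2), (i + 1) by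
        rw [sum_succ_shift]; congr 2; omega]
      apply Finset.sum_congr rfl
      intro i hi
      rw [Finset.mem_range] at hi
      rw [show r.length + i + 1 = r.length + (i + 1) from rfl, entQl' (by omega)]
  have hPa : area (Pl m r) = (List.range m).sum + area r := by
    rw [area, Pl, List.sum_append]; rfl
  have hQa : area (Ql m r) = area r + (List.range (m - 1)).sum := by
    rw [area, Ql, List.sum_append]; rfl
  rw [areaC, areaC, hP, hQ, hPa, hQa]
  omega

end Area

section Dinv

variable {m : ℕ} {r : List ℕ} {T : Finset ℕ} {c : Bool}

lemma card_filter_pin (a w : ℕ) :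
    ((Finset.range a).filter (fun j => j = w)).card = if w < a then 1 else 0 := by
  rw [Finset.filter_eq']
  split_ifs with h h' h'
  · simp
  · rw [Finset.mem_range] at h; exact absurd h h'
  · rw [Finset.mem_range] at h; exact absurd h' h
  · simp

lemma bval_PQ_chunk (hm : 2 ≤ m) {i : ℕ} (h1 : 1 ≤ i) (h2 : i < m) :
    bval (Pl m r) i = bval (Ql m r) (r.length + (i - 1)) := by
  have heP : ent (Pl m r) i = i := entPl h2
  have heQ : ent (Ql m r) (r.length + (i - 1)) = i - 1 := entQl' (by omega)
  rw [bval, bval, Pl_length, Ql_length, heP, heQ,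
    card_filter_range_add m r.length, card_filter_range_add m r.length,
    card_filter_range_add r.length (m - 1), card_filter_range_add r.length (m - 1)]
  have pA : ((Finset.range m).filter (fun j => i < j ∧ ent (Pl m r) j = i)).card = 0 := by
    rw [Finset.card_eq_zero]
    apply Finset.filter_false_of_mem
    intro j hj
    rw [Finset.mem_range] at hj
    rw [entPl hj]
    omega
  have pB : ((Finset.range r.length).filter (fun j => i < m + j ∧ ent (Pl m r) (m + j) = i)).card
      = ((Finset.range r.length).filter (fun j => ent r j = i)).card := by
    congr 1
    apply Finset.filter_congr
    intro j _
    rw [entPl']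
    constructor
    · exact fun h => h.2
    · exact fun h => ⟨by omega, h⟩
  have pC : ((Finset.range m).filter (fun j => j < i ∧ ent (Pl m r) j = i + 1)).card = 0 := by
    rw [Finset.card_eq_zero]
    apply Finset.filter_false_of_mem
    intro j hj
    rw [Finset.mem_range] at hj
    rw [entPl hj]
    omega
  have pD : ((Finset.range r.length).filter
      (fun j => m + j < i ∧ ent (Pl m r) (m + j) = i + 1)).card = 0 := by
    rw [Finset.card_eq_zero]
    apply Finset.filter_false_of_mem
    intro j hj
    omega
  have qA : ((Finset.range r.length).filter
      (fun j => r.length + (i - 1) < j ∧ ent (Ql m r) j = i - 1)).card = 0 := by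
    rw [Finset.card_eq_zero]
    apply Finset.filter_false_of_mem
    intro j hj
    rw [Finset.mem_range] at hj
    omega
  have qB : ((Finset.range (m - 1)).filter (fun j => r.length + (i - 1) < r.length + j ∧
      ent (Ql m r) (r.length + j) = i - 1)).card = 0 := by
    rw [Finset.card_eq_zero]
    apply Finset.filter_false_of_mem
    intro j hj
    rw [Finset.mem_range] at hj
    rw [entQl' hj]
    omega
  have qC : ((Finset.range r.length).filter
      (fun j => j < r.length + (i - 1) ∧ ent (Ql m r) j = i - 1 + 1)).card
      = ((Finset.range r.length).filter (fun j => ent r j = i)).card := by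
    congr 1
    apply Finset.filter_congr
    intro j hj
    rw [Finset.mem_range] at hj
    rw [entQl hj]
    constructor
    · intro h; rw [h.2]; omega
    · intro h; exact ⟨by omega, by omega⟩
  have qD : ((Finset.range (m - 1)).filter (fun j => r.length + j < r.length + (i - 1) ∧
      ent (Ql m r) (r.length + j) = i - 1 + 1)).card = 0 := by
    rw [Finset.card_eq_zero]
    apply Finset.filter_false_of_mem
    intro j hj
    rw [Finset.mem_range] at hj
    rw [entQl' hj]
    omega
  rw [pA, pB, pC, pD, qA, qB, qC, qD]
  omega

lemma bval_PQ_rest (hm : 2 ≤ m) {j' : ℕ} (h : j' < r.length) :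
    bval (Pl m r) (m + j') = bval (Ql m r) j' := by
  have heP : ent (Pl m r) (m + j') = ent r j' := entPl' j'
  have heQ : ent (Ql m r) j' = ent r j' := entQl h
  set v := ent r j' with hv
  rw [bval, bval, Pl_length, Ql_length, heP, heQ,
    card_filter_range_add m r.length, card_filter_range_add m r.length,
    card_filter_range_add r.length (m - 1), card_filter_range_add r.length (m - 1)]
  have pA : ((Finset.range m).filter (fun j => m + j' < j ∧ ent (Pl m r) j = v)).card = 0 := by
    rw [Finset.card_eq_zero]
    apply Finset.filter_false_of_mem
    intro j hj
    rw [Finset.mem_range] at hj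
    omega
  have pB : ((Finset.range r.length).filter
      (fun j => m + j' < m + j ∧ ent (Pl m r) (m + j) = v)).card
      = ((Finset.range r.length).filter (fun j => j' < j ∧ ent r j = v)).card := by
    congr 1
    apply Finset.filter_congr
    intro j _
    rw [entPl']
    constructor
    · intro hh; exact ⟨by omega, hh.2⟩
    · intro hh; exact ⟨by omega, hh.2⟩
  have pC : ((Finset.range m).filter (fun j => j < m + j' ∧ ent (Pl m r) j = v + 1)).card
      = if v + 1 < m then 1 else 0 := by
    rw [← card_filter_pin m (v + 1)]
    congr 1
    apply Finset.filter_congr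
    intro j hj
    rw [Finset.mem_range] at hj
    rw [entPl hj]
    constructor
    · exact fun h => h.2
    · intro h; exact ⟨by omega, h⟩
  have pD : ((Finset.range r.length).filter
      (fun j => m + j < m + j' ∧ ent (Pl m r) (m + j) = v + 1)).card
      = ((Finset.range r.length).filter (fun j => j < j' ∧ ent r j = v + 1)).card := by
    congr 1
    apply Finset.filter_congr
    intro j _
    rw [entPl']
    constructor
    · intro hh; exact ⟨by omega, hh.2⟩
    · intro hh; exact ⟨by omega, hh.2⟩
  have qA : ((Finset.range r.length).filter (fun j => j' < j ∧ ent (Ql m r) j = v)).card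
      = ((Finset.range r.length).filter (fun j => j' < j ∧ ent r j = v)).card := by
    congr 1
    apply Finset.filter_congr
    intro j hj
    rw [Finset.mem_range] at hj
    rw [entQl hj]
  have qB : ((Finset.range (m - 1)).filter
      (fun j => j' < r.length + j ∧ ent (Ql m r) (r.length + j) = v)).card
      = if v < m - 1 then 1 else 0 := by
    rw [← card_filter_pin (m - 1) v]
    congr 1
    apply Finset.filter_congr
    intro j hj
    rw [Finset.mem_range] at hj
    rw [entQl' hj]
    constructor
    · exact fun h => h.2
    · intro h; exact ⟨by omega, h⟩
  have qC : ((Finset.range r.length).filter (fun j => j < j' ∧ ent (Ql m r) j = v + 1)).card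
      = ((Finset.range r.length).filter (fun j => j < j' ∧ ent r j = v + 1)).card := by
    congr 1
    apply Finset.filter_congr
    intro j hj
    rw [Finset.mem_range] at hj
    rw [entQl hj]
  have qD : ((Finset.range (m - 1)).filter
      (fun j => r.length + j < j' ∧ ent (Ql m r) (r.length + j) = v + 1)).card = 0 := by
    rw [Finset.card_eq_zero]
    apply Finset.filter_false_of_mem
    intro j hj
    omega
  rw [pA, pB, pC, pD, qA, qB, qC, qD]
  have : (v + 1 < m) ↔ (v < m - 1) := by omega
  split_ifs with h1 h2 h2
  · omega
  · exact absurd (this.mp h1) h2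
  · exact absurd (this.mpr h2) h1
  · omega

lemma length_filter_range_eq_card (j : ℕ) (p : ℕ → Prop) [DecidablePred p]
    (pb : ℕ → Bool) (hpb : ∀ i, pb i = true ↔ p i) :
    ((List.range j).filter pb).length = ((Finset.range j).filter p).card := by
  induction j with
  | zero => simp
  | succ j ih =>
    rw [List.range_succ, List.filter_append, List.length_append, Finset.range_add_one,
      Finset.filter_insert]
    by_cases h : p j
    · have hb : pb j = true := (hpb j).mpr h
      rw [if_pos h, Finset.card_insert_of_notMem (fun hmem => by
        have := Finset.mem_range.mp (Finset.mem_of_mem_filter _ hmem); omega)]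
      simp [List.filter_singleton, hb, ih]
    · have hb : pb j = false := by
        rcases Bool.eq_false_or_eq_true (pb j) with h' | h'
        · exact absurd ((hpb j).mp h') h
        · exact h'
      rw [if_neg h]
      simp [List.filter_singleton, hb, ih]
  
lemma bval_P_zero (hm : 2 ≤ m) :
    bval (Pl m r) 0 = (segStarts r).length := by
  rw [bval, Pl_length, entPl (by omega), card_filter_range_add m r.length,
    card_filter_range_add m r.length]
  have pA : ((Finset.range m).filter (fun j => 0 < j ∧ ent (Pl m r) j = 0)).card = 0 := by
    rw [Finset.card_eq_zero]
    apply Finset.filter_false_of_mem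
    intro j hj
    rw [Finset.mem_range] at hj
    rw [entPl hj]
    omega
  have pB : ((Finset.range r.length).filter
      (fun j => 0 < m + j ∧ ent (Pl m r) (m + j) = 0)).card
      = ((Finset.range r.length).filter (fun j => ent r j = 0)).card := by
    congr 1
    apply Finset.filter_congr
    intro j _
    rw [entPl']
    constructor
    · exact fun h => h.2
    · intro h; exact ⟨by omega, h⟩
  have pC : ((Finset.range m).filter (fun j => j < 0 ∧ ent (Pl m r) j = 0 + 1)).card = 0 := by
    rw [Finset.card_eq_zero]
    apply Finset.filter_false_of_mem
    intro j hj
    omega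
  have pD : ((Finset.range r.length).filter
      (fun j => m + j < 0 ∧ ent (Pl m r) (m + j) = 0 + 1)).card = 0 := by
    rw [Finset.card_eq_zero]
    apply Finset.filter_false_of_mem
    intro j hj
    omega
  rw [pA, pB, pC, pD, segStarts,
    length_filter_range_eq_card r.length (fun j => ent r j = 0) _ (fun i => by simp)]
  omega

end Dinv
section DinvC

variable {m : ℕ} {r : List ℕ} {T : Finset ℕ} {c : Bool}

lemma mem_ifsingle {c : Bool} {x a : ℕ} :
    a ∈ (if c then ({x} : Finset ℕ) else ∅) ↔ c = true ∧ a = x := by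
  rcases c with _ | _ <;> simp

lemma dinvC_eq (l : List ℕ) (S : Finset ℕ) :
    dinvC l S = ∑ k ∈ Finset.range l.length \ peakSet l S, bval l k := by
  have hsub : peakSet l S ⊆ Finset.range l.length := fun i hi =>
    Finset.mem_range.2 (Finset.mem_filter.mp hi).2.1
  rw [dinvC, dinv_eq_sum_bval, ← Finset.sum_sdiff hsub]
  omega

lemma dinvC_PQ (hm : 2 ≤ m) (hGr : GoodRest r) (hT : ∀ i ∈ T, i < r.length) :
    dinvC (Pl m r) (PS m T c) =
      (segStarts r).length + dinvC (Ql m r) (QS r.length m T c) := by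
  classical
  rw [dinvC_eq, dinvC_eq, Pl_length, Ql_length, peakSet_Pl hm hGr hT, peakSet_Ql hm hT]
  set pr := peakSet r T with hpr
  have hprlt : ∀ j ∈ pr, j < r.length := fun j hj => (Finset.mem_filter.mp hj).2.1
  set DP := Finset.range (m + r.length) \ ((if c then {m - 1} else ∅) ∪ pr.image (m + ·))
    with hDP
  set DQ := Finset.range (r.length + (m - 1)) \
      (pr ∪ (if c then {r.length + (m - 2)} else ∅)) with hDQ
  have h0 : 0 ∈ DP := by
    rw [hDP, Finset.mem_sdiff, Finset.mem_range]
    refine ⟨by omega, ?_⟩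
    intro hmem
    rcases Finset.mem_union.mp hmem with h | h
    · rw [mem_ifsingle] at h; omega
    · obtain ⟨j, -, hj⟩ := Finset.mem_image.mp h; omega
  rw [← Finset.add_sum_erase _ _ h0, bval_P_zero hm]
  congr 1
  refine Finset.sum_nbij' (fun a => if a < m then r.length + (a - 1) else a - m)
    (fun b => if b < r.length then m + b else b - r.length + 1) ?_ ?_ ?_ ?_ ?_
  · intro a ha
    rw [Finset.mem_erase, hDP, Finset.mem_sdiff, Finset.mem_range] at ha
    obtain ⟨ha0, haR, haN⟩ := ha
    rw [hDQ, Finset.mem_sdiff, Finset.mem_range]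
    by_cases ham : a < m
    · rw [if_pos ham]
      refine ⟨by omega, ?_⟩
      intro hmem
      rcases Finset.mem_union.mp hmem with h | h
      · have := hprlt _ h; omega
      · rw [mem_ifsingle] at h
        exact haN (Finset.mem_union_left _ (mem_ifsingle.mpr ⟨h.1, by omega⟩))
    · rw [if_neg ham]
      refine ⟨by omega, ?_⟩
      intro hmem
      rcases Finset.mem_union.mp hmem with h | h
      · exact haN (Finset.mem_union_right _ (Finset.mem_image.mpr ⟨a - m, h, by omega⟩))
      · rw [mem_ifsingle] at h
        omega
  · intro b hb
    rw [hDQ, Finset.mem_sdiff, Finset.mem_range] at hb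
    obtain ⟨hbR, hbN⟩ := hb
    rw [Finset.mem_erase, hDP, Finset.mem_sdiff, Finset.mem_range]
    by_cases hbr : b < r.length
    · rw [if_pos hbr]
      refine ⟨by omega, by omega, ?_⟩
      intro hmem
      rcases Finset.mem_union.mp hmem with h | h
      · rw [mem_ifsingle] at h; omega
      · obtain ⟨j, hj, hje⟩ := Finset.mem_image.mp h
        have : j = b := by omega
        exact hbN (Finset.mem_union_left _ (this ▸ hj))
    · rw [if_neg hbr]
      refine ⟨by omega, by omega, ?_⟩
      intro hmem
      rcases Finset.mem_union.mp hmem with h | h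
      · rw [mem_ifsingle] at h
        exact hbN (Finset.mem_union_right _ (mem_ifsingle.mpr ⟨h.1, by omega⟩))
      · obtain ⟨j, hj, hje⟩ := Finset.mem_image.mp h
        have := hprlt _ hj
        omega
  · intro a ha
    rw [Finset.mem_erase, hDP, Finset.mem_sdiff, Finset.mem_range] at ha
    obtain ⟨ha0, haR, -⟩ := ha
    by_cases ham : a < m
    · rw [if_pos ham, if_neg (by omega)]
      omega
    · rw [if_neg ham, if_pos (by omega)]
      omega
  · intro b hb
    rw [hDQ, Finset.mem_sdiff, Finset.mem_range] at hb
    obtain ⟨hbR, -⟩ := hb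
    by_cases hbr : b < r.length
    · rw [if_pos hbr, if_neg (by omega)]
      omega
    · rw [if_neg hbr, if_pos (by omega)]
      omega
  · intro a ha
    rw [Finset.mem_erase, hDP, Finset.mem_sdiff, Finset.mem_range] at ha
    obtain ⟨ha0, haR, -⟩ := ha
    by_cases ham : a < m
    · rw [if_pos ham]
      exact bval_PQ_chunk hm (by omega) ham
    · rw [if_neg ham]
      rw [show a = m + (a - m) by omega, bval_PQ_rest hm (by omega)]
      congr 1
      omega

end DinvC

section Valid

variable {m : ℕ} {r : List ℕ} {T : Finset ℕ} {c : Bool}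

lemma Pl_ne_nil (hm : 2 ≤ m) : Pl m r ≠ [] := by
  intro h
  have := congrArg List.length h
  rw [Pl_length] at this
  simp at this
  omega

lemma Ql_ne_nil (hm : 2 ≤ m) : Ql m r ≠ [] := by
  intro h
  have := congrArg List.length h
  rw [Ql_length] at this
  simp at this
  omega

lemma isDyck_Pl (hm : 2 ≤ m) (hGr : GoodRest r) : IsDyck (Pl m r) := by
  refine ⟨Pl_ne_nil hm, entPl (by omega), ?_⟩
  intro i hi hi1
  rw [Pl_length] at hi hi1
  rcases Nat.lt_or_ge (i + 1) m with h | h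
  · rw [entPl h, entPl (by omega)]
  · rcases Nat.eq_or_lt_of_le h with h' | h'
    · have hrne : r ≠ [] := by
        intro he
        rw [he] at hi1
        simp at hi1
        omega
      rw [show i + 1 = m + 0 by omega, entPl', hGr.1 hrne, entPl (by omega)]
      omega
    · have e1 : ent (Pl m r) (i + 1) = ent r (i + 1 - m) := by
        rw [show i + 1 = m + (i + 1 - m) by omega, entPl']
        congr 1
        omega
      have e2 : ent (Pl m r) i = ent r (i - m) := by
        rw [show i = m + (i - m) by omega, entPl']
        congr 1
        omega
      rw [e1, e2]
      have := hGr.2 (i - m) (by omega)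
      rw [show i - m + 1 = i + 1 - m by omega] at this
      exact this

lemma isDyck_Ql (hm : 2 ≤ m) (hGr : GoodRest r) : IsDyck (Ql m r) := by
  refine ⟨Ql_ne_nil hm, ?_, ?_⟩
  · rcases Nat.eq_zero_or_pos r.length with h | h
    · have := entQl' (m := m) (r := r) (j := 0) (by omega)
      rw [h] at this
      simpa using this
    · rw [entQl h]
      exact hGr.1 (by intro he; rw [he] at h; simp at h)
  · intro i hi hi1
    rw [Ql_length] at hi hi1
    rcases Nat.lt_or_ge (i + 1) r.length with h | h
    · rw [entQl h, entQl (by omega)]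
      exact hGr.2 i h
    · rcases Nat.eq_or_lt_of_le h with h' | h'
      · have e1 : ent (Ql m r) (i + 1) = 0 := by
          rw [show i + 1 = r.length + 0 by omega, entQl' (by omega)]
        rw [e1]
        omega
      · have e1 : ent (Ql m r) (i + 1) = i + 1 - r.length := by
          rw [show i + 1 = r.length + (i + 1 - r.length) by omega, entQl' (by omega)]
          omega
        have e2 : ent (Ql m r) i = i - r.length := by
          rw [show i = r.length + (i - r.length) by omega, entQl' (by omega)]
          omega
        rw [e1, e2]
        omega

lemma PS_subset (hm : 2 ≤ m) (hT : ∀ i ∈ T, i < r.length) :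
    PS m T c ⊆ Finset.range (m + r.length) := by
  intro i hi
  rw [mem_PS hm] at hi
  rw [Finset.mem_range]
  rcases hi with h | ⟨-, rfl⟩ | ⟨j, hj, rfl⟩
  · omega
  · omega
  · have := hT j hj; omega

lemma QS_subset (hm : 2 ≤ m) (hT : ∀ i ∈ T, i < r.length) :
    QS r.length m T c ⊆ Finset.range (r.length + (m - 1)) := by
  intro i hi
  rw [mem_QS hm] at hi
  rw [Finset.mem_range]
  rcases hi with h | ⟨j, hj, rfl⟩ | ⟨-, rfl⟩
  · have := hT i h; omega
  · omega
  · omega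

lemma lastMax_PQ (hm : 2 ≤ m) (hGr : GoodRest r) (hT : ∀ i ∈ T, i < r.length) :
    (lastMaxRow (Pl m r) ∈ PS m T c) ↔ (lastMaxRow (Ql m r) ∈ QS r.length m T c) := by
  by_cases H : ∀ j, j < r.length → ent r j < m - 1
  · have hP : lastMaxRow (Pl m r) = m - 1 := by
      apply lastMaxRow_eq (Pl_ne_nil hm) (by rw [Pl_length]; omega)
      · intro j hj
        rw [Pl_length] at hj
        rw [entPl (show m - 1 < m by omega)]
        rcases Nat.lt_or_ge j m with h | h
        · rw [entPl h]; omega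
        · have e : ent (Pl m r) j = ent r (j - m) := by
            rw [show j = m + (j - m) by omega, entPl']
            congr 1
            omega
          rw [e]
          have := H (j - m) (by omega)
          omega
      · intro j h1 h2
        rw [Pl_length] at h2
        rw [entPl (show m - 1 < m by omega)]
        have e : ent (Pl m r) j = ent r (j - m) := by
          rw [show j = m + (j - m) by omega, entPl']
          congr 1
          omega
        rw [e]
        have := H (j - m) (by omega)
        omega
    have hQ : lastMaxRow (Ql m r) = r.length + (m - 2) := by
      apply lastMaxRow_eq (Ql_ne_nil hm) (by rw [Ql_length]; omega)
      · intro j hj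
        rw [Ql_length] at hj
        rw [entQl' (show m - 2 < m - 1 by omega)]
        rcases Nat.lt_or_ge j r.length with h | h
        · rw [entQl h]
          have := H j h
          omega
        · have e : ent (Ql m r) j = j - r.length := by
            rw [show j = r.length + (j - r.length) by omega, entQl' (by omega)]
            omega
          rw [e]
          omega
      · intro j h1 h2
        rw [Ql_length] at h2
        omega
    rw [hP, hQ, mem_PS hm, mem_QS hm]
    constructor
    · rintro (h | ⟨hc, -⟩ | ⟨j, hj, hje⟩)
      · omega
      · exact Or.inr (Or.inr ⟨hc, rfl⟩)
      · omega
    · rintro (h | ⟨j, hj, hje⟩ | ⟨hc, -⟩)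
      · have := hT _ h; omega
      · omega
      · exact Or.inr (Or.inl ⟨hc, rfl⟩)
  · push_neg at H
    obtain ⟨w0, hw0, hw0e⟩ := H
    have hrne : r ≠ [] := by
      intro he
      rw [he] at hw0
      simp at hw0
    obtain ⟨hs1, hs2, hs3⟩ := lastMaxRow_spec hrne
    set w := lastMaxRow r with hwdef
    have hw : m - 1 ≤ ent r w := le_trans hw0e (hs2 _ hw0)
    have hP : lastMaxRow (Pl m r) = m + w := by
      apply lastMaxRow_eq (Pl_ne_nil hm) (by rw [Pl_length]; omega)
      · intro j hj
        rw [Pl_length] at hj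
        rw [entPl' w]
        rcases Nat.lt_or_ge j m with h | h
        · rw [entPl h]; omega
        · have e : ent (Pl m r) j = ent r (j - m) := by
            rw [show j = m + (j - m) by omega, entPl']
            congr 1
            omega
          rw [e]
          exact hs2 _ (by omega)
      · intro j h1 h2
        rw [Pl_length] at h2
        rw [entPl' w]
        have e : ent (Pl m r) j = ent r (j - m) := by
          rw [show j = m + (j - m) by omega, entPl']
          congr 1
          omega
        rw [e]
        exact hs3 _ (by omega) (by omega)
    have hQ : lastMaxRow (Ql m r) = w := by
      apply lastMaxRow_eq (Ql_ne_nil hm) (by rw [Ql_length]; omega)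
      · intro j hj
        rw [Ql_length] at hj
        rw [entQl hs1]
        rcases Nat.lt_or_ge j r.length with h | h
        · rw [entQl h]
          exact hs2 _ h
        · have e : ent (Ql m r) j = j - r.length := by
            rw [show j = r.length + (j - r.length) by omega, entQl' (by omega)]
            omega
          rw [e]
          omega
      · intro j h1 h2
        rw [Ql_length] at h2
        rw [entQl hs1]
        rcases Nat.lt_or_ge j r.length with h | h
        · rw [entQl h]
          exact hs3 _ h1 h
        · have e : ent (Ql m r) j = j - r.length := by
            rw [show j = r.length + (j - r.length) by omega, entQl' (by omega)]
            omega
          rw [e]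
          omega
    rw [hP, hQ, mem_PS hm, mem_QS hm]
    constructor
    · rintro (h | ⟨-, hje⟩ | ⟨j, hj, hje⟩)
      · omega
      · omega
      · have : j = w := by omega
        exact Or.inl (this ▸ hj)
    · rintro (h | ⟨j, hj, hje⟩ | ⟨-, hje⟩)
      · exact Or.inr (Or.inr ⟨w, h, rfl⟩)
      · omega
      · omega

end Valid
section Extract

lemma ent_eq_getElem {l : List ℕ} {i : ℕ} (h : i < l.length) : ent l i = l[i] :=
  List.getD_eq_getElem _ _ h

lemma ent_drop (a : ℕ) (l : List ℕ) (j : ℕ) : ent (l.drop a) j = ent l (a + j) := by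
  rcases Nat.lt_or_ge (a + j) l.length with h | h
  · rw [ent_eq_getElem (by rw [List.length_drop]; omega), ent_eq_getElem h, List.getElem_drop]
  · rw [ent_default _ _ (by rw [List.length_drop]; omega), ent_default _ _ h]

lemma ent_take {l : List ℕ} {a j : ℕ} (h : j < a) (h2 : a ≤ l.length) :
    ent (l.take a) j = ent l j := by
  rw [ent_eq_getElem (by rw [List.length_take]; omega), ent_eq_getElem (by omega),
    List.getElem_take]

/-- start of the second segment (or the length if only one segment) -/
def mzero (l : List ℕ) : ℕ := ((segStarts l).drop 1).headD l.length

/-- start of the last segment -/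
def uzero (l : List ℕ) : ℕ := (segStarts l).getLastD 0

lemma segStarts_sorted (l : List ℕ) : (segStarts l).Pairwise (· < ·) :=
  List.Pairwise.filter _ List.pairwise_lt_range

lemma isDyck_goodRest {l : List ℕ} (h : IsDyck l) : GoodRest l :=
  ⟨fun _ => h.2.1, fun i hi => h.2.2 i (by omega) hi⟩

lemma seg_extract {l : List ℕ} {S : Finset ℕ} {s e : ℕ}
    (hs0 : ent l s = 0) (hse : s < e) (hel : e ≤ l.length)
    (he : e = l.length ∨ ent l e = 0)
    (hpart : (e - s) - ((riseSet l S).filter (fun i => s ≤ i ∧ i < e)).card = 1) :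
    (∀ i, i < e - s → ent l (s + i) = i) ∧ (∀ j, s ≤ j → j < e - 1 → j ∈ riseSet l S) := by
  classical
  set F := (riseSet l S).filter (fun i => s ≤ i ∧ i < e) with hF
  have hsub : F ⊆ Finset.Ico s (e - 1) := by
    intro i hi
    rw [hF, Finset.mem_filter] at hi
    obtain ⟨hir, his, hie⟩ := hi
    have hrise : IsRise l i := (Finset.mem_filter.mp hir).2
    rw [Finset.mem_Ico]
    refine ⟨his, ?_⟩
    by_contra hcon
    have hie1 : i + 1 = e := by omega
    rcases he with h | h
    · have := hrise.1; omega
    · have := hrise.2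
      rw [hie1, h] at this
      omega
  have hcard0 : F.card ≤ e - 1 - s := by
    have := Finset.card_le_card hsub
    rwa [Nat.card_Ico] at this
  have hFeq : F = Finset.Ico s (e - 1) :=
    Finset.eq_of_subset_of_card_le hsub (by rw [Nat.card_Ico]; omega)
  have hrises : ∀ j, s ≤ j → j < e - 1 → j ∈ riseSet l S := by
    intro j h1 h2
    have : j ∈ F := hFeq ▸ Finset.mem_Ico.mpr ⟨h1, h2⟩
    exact Finset.mem_of_mem_filter _ this
  refine ⟨?_, hrises⟩
  intro i
  induction i with
  | zero => intro _; simpa using hs0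
  | succ i ih =>
    intro hi
    have hr : s + i ∈ riseSet l S := hrises (s + i) (by omega) (by omega)
    have hrr := (Finset.mem_filter.mp hr).2.2
    rw [show s + (i + 1) = s + i + 1 from rfl, hrr, ih (by omega)]

lemma mzero_facts {l : List ℕ} (hGl : GoodRest l) (hne : l ≠ []) :
    0 < mzero l ∧ mzero l ≤ l.length ∧ (mzero l = l.length ∨ ent l (mzero l) = 0) := by
  obtain ⟨t, ht, -⟩ := segStarts_cons hGl hne
  rw [mzero, ht]
  cases t with
  | nil =>
    simp only [List.drop_succ_cons, List.drop_zero, List.headD_nil]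
    exact ⟨List.length_pos_iff.2 hne, le_refl _, Or.inl (by trivial)⟩
  | cons a t' =>
    simp only [List.drop_succ_cons, List.drop_zero, List.headD_cons]
    have hmem : a ∈ segStarts l := by rw [ht]; simp
    rw [mem_segStarts] at hmem
    have hsort := segStarts_sorted l
    rw [ht] at hsort
    have : 0 < a := (List.pairwise_cons.mp hsort).1 a (by simp)
    exact ⟨this, by omega, Or.inr hmem.2⟩

lemma riseTouch_head (l : List ℕ) (S : Finset ℕ) (hGl : GoodRest l) (hne : l ≠ []) :
    ∃ γ, riseTouch l S =
      (mzero l - ((riseSet l S).filter (fun i => 0 ≤ i ∧ i < mzero l)).card) :: γ := by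
  obtain ⟨t, ht, -⟩ := segStarts_cons hGl hne
  rw [riseTouch, ht, mzero, ht]
  cases t with
  | nil =>
    simp only [List.drop_succ_cons, List.drop_zero, List.headD_nil, List.nil_append,
      List.zipWith_cons_cons, List.zipWith_nil_right]
    exact ⟨[], by rw [Nat.sub_zero]⟩
  | cons a t' =>
    simp only [List.drop_succ_cons, List.drop_zero, List.headD_cons, List.cons_append,
      List.zipWith_cons_cons]
    exact ⟨_, by rw [Nat.sub_zero]⟩

lemma zipWith_last (f : ℕ → ℕ → ℕ) :
    ∀ (ss : List ℕ) (h : ss ≠ []) (a : ℕ),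
      ∃ γ, List.zipWith f ss (ss.drop 1 ++ [a]) = γ ++ [f (ss.getLast h) a] := by
  intro ss
  induction ss with
  | nil => intro h; exact absurd rfl h
  | cons x t ih =>
    intro h a
    cases t with
    | nil => exact ⟨[], by simp⟩
    | cons y t' =>
      obtain ⟨γ, hγ⟩ := ih (by simp) a
      refine ⟨f x y :: γ, ?_⟩
      rw [List.getLast_cons (by simp)]
      simp only [List.drop_succ_cons, List.drop_zero, List.cons_append,
        List.zipWith_cons_cons]
      rw [← hγ]
      simp

lemma uzero_facts {l : List ℕ} (hGl : GoodRest l) (hne : l ≠ []) :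
    uzero l < l.length ∧ ent l (uzero l) = 0 := by
  obtain ⟨t, ht, -⟩ := segStarts_cons hGl hne
  have hne' : segStarts l ≠ [] := by rw [ht]; simp
  have hu : uzero l = (segStarts l).getLast hne' := by
    rw [uzero, List.getLastD_eq_getLast?, List.getLast?_eq_getLast hne']
    rfl
  have hmem : uzero l ∈ segStarts l := hu ▸ List.getLast_mem hne'
  rw [mem_segStarts] at hmem
  exact hmem

lemma uzero_max {l : List ℕ} {j : ℕ} (hj : j ∈ segStarts l) : j ≤ uzero l := by
  have hne' : segStarts l ≠ [] := by intro h; rw [h] at hj; simp at hj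
  have hu : uzero l = (segStarts l).getLast hne' := by
    rw [uzero, List.getLastD_eq_getLast?, List.getLast?_eq_getLast hne']
    rfl
  rw [hu]
  have := segStarts_sorted l
  rw [← List.dropLast_append_getLast hne'] at hj this
  rcases List.mem_append.mp hj with h | h
  · have := (List.pairwise_append.mp this).2.2
    exact le_of_lt (this j h _ (by simp))
  · simp at h
    omega

lemma riseTouch_last (l : List ℕ) (S : Finset ℕ) (hGl : GoodRest l) (hne : l ≠ []) :
    ∃ γ, riseTouch l S = γ ++
      [(l.length - uzero l) -
        ((riseSet l S).filter (fun i => uzero l ≤ i ∧ i < l.length)).card] := by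
  obtain ⟨t, ht, -⟩ := segStarts_cons hGl hne
  have hne' : segStarts l ≠ [] := by rw [ht]; simp
  have hu : uzero l = (segStarts l).getLast hne' := by
    rw [uzero, List.getLastD_eq_getLast?, List.getLast?_eq_getLast hne']
    rfl
  obtain ⟨γ, hγ⟩ := zipWith_last
    (fun cur next => next - cur - ((riseSet l S).filter (fun i => cur ≤ i ∧ i < next)).card)
    (segStarts l) hne' l.length
  rw [riseTouch, hγ, ← hu]
  exact ⟨γ, rfl⟩

lemma structureA {n : ℕ} {p : List ℕ × Finset ℕ} {β : List ℕ}
    (hp : p ∈ decPaths n) (hrt : riseTouch p.1 p.2 = 1 :: β)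
    (hrise0 : IsRise p.1 0) (h0S : 0 ∈ p.2) :
    ∃ m r T c, 2 ≤ m ∧ GoodRest r ∧ (∀ i ∈ T, i < r.length) ∧
      p.1 = Pl m r ∧ p.2 = PS m T c ∧ n = m + r.length := by
  classical
  obtain ⟨l, S⟩ := p
  simp only [decPaths, Finset.mem_filter, Finset.mem_product, Finset.mem_powerset] at hp
  obtain ⟨⟨hseq, hpow⟩, hDy, hVd⟩ := hp
  rw [mem_allSeqs] at hseq
  obtain ⟨hlen, -⟩ := hseq
  have hGl : GoodRest l := isDyck_goodRest hDy
  have hne : l ≠ [] := hDy.1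
  obtain ⟨hm0, hml, hmz⟩ := mzero_facts hGl hne
  obtain ⟨γ, hγ⟩ := riseTouch_head l S hGl hne
  rw [hrt] at hγ
  have hpart : mzero l - ((riseSet l S).filter (fun i => 0 ≤ i ∧ i < mzero l)).card = 1 :=
    (List.cons.injEq _ _ _ _).mp hγ.symm |>.1
  set e := mzero l with he
  obtain ⟨hent, hrs⟩ := seg_extract (s := 0) (e := e) hDy.2.1 hm0 hml hmz
    (by simpa using hpart)
  have hm2 : 2 ≤ e := by
    have h0F : 0 ∈ (riseSet l S).filter (fun i => 0 ≤ i ∧ i < e) := by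
      rw [Finset.mem_filter]
      exact ⟨Finset.mem_filter.mpr ⟨h0S, hrise0⟩, by omega, by omega⟩
    have := Finset.card_pos.mpr ⟨0, h0F⟩
    omega
  have hentl : ∀ i, i < e → ent l i = i := by
    intro i hi
    have := hent i (by omega)
    simpa using this
  have hSsub : ∀ i ∈ S, i < n := fun i hi => Finset.mem_range.mp (hpow hi)
  have htake : List.range e ++ l.drop e = l := by
    nth_rewrite 2 [← List.take_append_drop e l]
    congr 1
    apply List.ext_getElem (by rw [List.length_range, List.length_take]; omega)
    intro i h1 h2
    rw [List.length_range] at h1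
    rw [List.getElem_range, List.getElem_take]
    rw [← ent_eq_getElem (by omega), hentl i h1]
  refine ⟨e, l.drop e, (S.filter (e ≤ ·)).image (· - e), decide ((e - 1) ∈ S), hm2, ?_, ?_,
    by rw [Pl, htake], ?_, by rw [List.length_drop]; omega⟩
  · constructor
    · intro hdne
      have hel : e < l.length := by
        rcases Nat.lt_or_ge e l.length with h | h
        · exact h
        · exfalso
          apply hdne
          rw [List.drop_eq_nil_iff]
          omega
      rw [ent_drop, Nat.add_zero]
      rcases hmz with h | h
      · omega
      · exact h
    · intro i hi
      rw [List.length_drop] at hi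
      rw [ent_drop, ent_drop, show e + (i + 1) = (e + i) + 1 from rfl]
      exact hDy.2.2 (e + i) (by omega) (by omega)
  · intro i hi
    obtain ⟨i', hi', rfl⟩ := Finset.mem_image.mp hi
    rw [Finset.mem_filter] at hi'
    have := hSsub i' hi'.1
    rw [List.length_drop]
    omega
  · ext i
    rw [mem_PS hm2]
    constructor
    · intro hiS
      have hin := hSsub i hiS
      rcases Nat.lt_or_ge i (e - 1) with h | h
      · exact Or.inl h
      · rcases Nat.lt_or_ge i e with h' | h'
        · refine Or.inr (Or.inl ⟨?_, by omega⟩)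
          rw [decide_eq_true_eq, show e - 1 = i by omega]
          exact hiS
        · refine Or.inr (Or.inr ⟨i - e, ?_, by omega⟩)
          exact Finset.mem_image.mpr ⟨i, Finset.mem_filter.mpr ⟨hiS, h'⟩, rfl⟩
    · rintro (h | ⟨hc, rfl⟩ | ⟨j, hj, rfl⟩)
      · exact Finset.mem_of_mem_filter _ (hrs i (by omega) h)
      · rwa [decide_eq_true_eq] at hc
      · obtain ⟨i', hi', rfl⟩ := Finset.mem_image.mp hj
        rw [Finset.mem_filter] at hi'
        rw [show e + (i' - e) = i' by omega]
        exact hi'.1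

lemma structureB {n' : ℕ} {q : List ℕ × Finset ℕ} {β : List ℕ}
    (hq : q ∈ decPaths n') (hrt : riseTouch q.1 q.2 = β ++ [1]) :
    ∃ m r T c, 2 ≤ m ∧ GoodRest r ∧ (∀ i ∈ T, i < r.length) ∧
      q.1 = Ql m r ∧ q.2 = QS r.length m T c ∧ n' = r.length + (m - 1) := by
  classical
  obtain ⟨l, S⟩ := q
  simp only [decPaths, Finset.mem_filter, Finset.mem_product, Finset.mem_powerset] at hq
  obtain ⟨⟨hseq, hpow⟩, hDy, hVd⟩ := hq
  rw [mem_allSeqs] at hseq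
  obtain ⟨hlen, -⟩ := hseq
  have hGl : GoodRest l := isDyck_goodRest hDy
  have hne : l ≠ [] := hDy.1
  obtain ⟨hul, hu0⟩ := uzero_facts hGl hne
  obtain ⟨γ, hγ⟩ := riseTouch_last l S hGl hne
  rw [hrt] at hγ
  have hpart : (l.length - uzero l) -
      ((riseSet l S).filter (fun i => uzero l ≤ i ∧ i < l.length)).card = 1 := by
    have h1 := congrArg List.getLast? hγ
    rw [List.getLast?_concat, List.getLast?_concat] at h1
    exact (Option.some.injEq _ _).mp h1 |>.symm
  set u := uzero l with hu
  obtain ⟨hent, hrs⟩ := seg_extract (s := u) (e := l.length) hu0 hul (le_refl _)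
    (Or.inl rfl) hpart
  set m := (l.length - u) + 1 with hmdef
  have hm2 : 2 ≤ m := by omega
  have hSsub : ∀ i ∈ S, i < n' := fun i hi => Finset.mem_range.mp (hpow hi)
  have htake : l.take u ++ List.range (m - 1) = l := by
    nth_rewrite 2 [← List.take_append_drop u l]
    congr 1
    apply List.ext_getElem (by rw [List.length_range, List.length_drop]; omega)
    intro i h1 h2
    rw [List.length_range] at h1
    rw [List.getElem_range, List.getElem_drop, ← ent_eq_getElem (by omega), hent i (by omega)]
  have hrlen : (l.take u).length = u := by rw [List.length_take]; omega
  refine ⟨m, l.take u, S.filter (· < u), decide ((l.length - 1) ∈ S), hm2, ?_, ?_,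
    by rw [Ql, htake], ?_, by omega⟩
  · constructor
    · intro hdne
      have hu1 : 0 < u := by
        rcases Nat.eq_zero_or_pos u with h | h
        · exfalso; apply hdne; rw [h]; simp
        · exact h
      rw [ent_take hu1 (by omega)]
      exact hDy.2.1
    · intro i hi
      rw [hrlen] at hi
      rw [ent_take (by omega) (by omega), ent_take (by omega) (by omega)]
      exact hDy.2.2 i (by omega) (by omega)
  · intro i hi
    rw [Finset.mem_filter] at hi
    rw [hrlen]
    exact hi.2
  · rw [hrlen]
    ext i
    rw [mem_QS hm2]
    constructor
    · intro hiS
      have hin := hSsub i hiS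
      rcases Nat.lt_or_ge i u with h | h
      · exact Or.inl (Finset.mem_filter.mpr ⟨hiS, h⟩)
      · rcases Nat.lt_or_ge i (l.length - 1) with h' | h'
        · exact Or.inr (Or.inl ⟨i - u, by omega, by omega⟩)
        · refine Or.inr (Or.inr ⟨?_, by omega⟩)
          rw [decide_eq_true_eq, show l.length - 1 = i by omega]
          exact hiS
    · rintro (h | ⟨j, hj, rfl⟩ | ⟨hc, rfl⟩)
      · exact Finset.mem_of_mem_filter _ h
      · exact Finset.mem_of_mem_filter _ (hrs (u + j) (by omega) (by omega))
      · rw [decide_eq_true_eq] at hc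
        rw [show u + (m - 2) = l.length - 1 by omega]
        exact hc

end Extract
section Maps

variable {m : ℕ} {r : List ℕ} {T : Finset ℕ} {c : Bool}

/-- the rotation map on pairs -/
def PhiMap (p : List ℕ × Finset ℕ) : List ℕ × Finset ℕ :=
  (p.1.drop (mzero p.1) ++ List.range (mzero p.1 - 1),
   (p.2.erase 0).image
     (fun i => if i < mzero p.1 then (p.1.length - mzero p.1) + (i - 1) else i - mzero p.1))

/-- the inverse rotation map on pairs -/
def PsiMap (q : List ℕ × Finset ℕ) : List ℕ × Finset ℕ :=
  (List.range (q.1.length - uzero q.1 + 1) ++ q.1.take (uzero q.1),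
   insert 0 (q.2.image
     (fun j => if j < uzero q.1 then (q.1.length - uzero q.1 + 1) + j else j - uzero q.1 + 1)))

lemma mzero_Pl (hm : 2 ≤ m) (hGr : GoodRest r) : mzero (Pl m r) = m := by
  rw [mzero, segStarts_Pl hm]
  rcases eq_or_ne r [] with rfl | hne
  · rw [segStarts_nil]
    simp [Pl_length]
  · obtain ⟨t, ht, -⟩ := segStarts_cons hGr hne
    rw [ht]
    simp

lemma uzero_Ql (hm : 2 ≤ m) : uzero (Ql m r) = r.length := by
  rw [uzero, segStarts_Ql hm, List.getLastD_concat]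

lemma PS_image (hm : 2 ≤ m) (hT : ∀ i ∈ T, i < r.length) :
    ((PS m T c).erase 0).image (fun i => if i < m then r.length + (i - 1) else i - m) =
      QS r.length m T c := by
  ext i
  rw [mem_QS hm]
  simp only [Finset.mem_image, Finset.mem_erase]
  constructor
  · rintro ⟨a, ⟨ha0, haPS⟩, rfl⟩
    rw [mem_PS hm] at haPS
    rcases haPS with h | ⟨hc, rfl⟩ | ⟨j, hj, rfl⟩
    · rw [if_pos (by omega)]
      exact Or.inr (Or.inl ⟨a - 1, by omega, by omega⟩)
    · rw [if_pos (by omega)]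
      exact Or.inr (Or.inr ⟨hc, by omega⟩)
    · rw [if_neg (by omega)]
      have := hT j hj
      refine Or.inl ?_
      rw [show m + j - m = j by omega]
      exact hj
  · rintro (h | ⟨j, hj, rfl⟩ | ⟨hc, rfl⟩)
    · refine ⟨m + i, ⟨by omega, ?_⟩, by rw [if_neg (by omega)]; omega⟩
      rw [mem_PS hm]
      exact Or.inr (Or.inr ⟨i, h, rfl⟩)
    · refine ⟨j + 1, ⟨by omega, ?_⟩, by rw [if_pos (by omega)]; omega⟩
      rw [mem_PS hm]
      exact Or.inl (by omega)
    · refine ⟨m - 1, ⟨by omega, ?_⟩, by rw [if_pos (by omega)]; omega⟩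
      rw [mem_PS hm]
      exact Or.inr (Or.inl ⟨hc, rfl⟩)

lemma QS_image (hm : 2 ≤ m) (hT : ∀ i ∈ T, i < r.length) :
    insert 0 ((QS r.length m T c).image
      (fun j => if j < r.length then m + j else j - r.length + 1)) = PS m T c := by
  ext i
  rw [mem_PS hm]
  simp only [Finset.mem_insert, Finset.mem_image]
  constructor
  · rintro (rfl | ⟨a, haQS, rfl⟩)
    · exact Or.inl (by omega)
    · rw [mem_QS hm] at haQS
      rcases haQS with h | ⟨j, hj, rfl⟩ | ⟨hc, rfl⟩
      · rw [if_pos (hT a h)]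
        exact Or.inr (Or.inr ⟨a, h, rfl⟩)
      · rw [if_neg (by omega)]
        exact Or.inl (by omega)
      · rw [if_neg (by omega)]
        exact Or.inr (Or.inl ⟨hc, by omega⟩)
  · rintro (h | ⟨hc, rfl⟩ | ⟨j, hj, rfl⟩)
    · rcases Nat.eq_zero_or_pos i with rfl | hi
      · exact Or.inl rfl
      · refine Or.inr ⟨r.length + (i - 1), ?_, by rw [if_neg (by omega)]; omega⟩
        rw [mem_QS hm]
        exact Or.inr (Or.inl ⟨i - 1, by omega, rfl⟩)
    · refine Or.inr ⟨r.length + (m - 2), ?_, by rw [if_neg (by omega)]; omega⟩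
      rw [mem_QS hm]
      exact Or.inr (Or.inr ⟨hc, rfl⟩)
    · refine Or.inr ⟨j, ?_, by rw [if_pos (hT j hj)]⟩
      rw [mem_QS hm]
      exact Or.inl hj

lemma PhiMap_P (hm : 2 ≤ m) (hGr : GoodRest r) (hT : ∀ i ∈ T, i < r.length) :
    PhiMap (Pl m r, PS m T c) = (Ql m r, QS r.length m T c) := by
  have hz : mzero (Pl m r) = m := mzero_Pl hm hGr
  have hlen : (Pl m r).length - m = r.length := by rw [Pl_length]; omega
  rw [PhiMap]
  dsimp only
  rw [hz, hlen, Prod.mk.injEq]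
  constructor
  · rw [Ql, Pl, List.drop_left' (by simp)]
  · exact PS_image hm hT

lemma PsiMap_Q (hm : 2 ≤ m) (hGr : GoodRest r) (hT : ∀ i ∈ T, i < r.length) :
    PsiMap (Ql m r, QS r.length m T c) = (Pl m r, PS m T c) := by
  have hz : uzero (Ql m r) = r.length := uzero_Ql hm
  have hlen : (Ql m r).length - r.length + 1 = m := by rw [Ql_length]; omega
  rw [PsiMap]
  dsimp only
  rw [hz, hlen, Prod.mk.injEq]
  constructor
  · rw [Pl, Ql, List.take_left' rfl]
  · exact QS_image hm hT

lemma memP_decPaths (hm : 2 ≤ m) (hGr : GoodRest r) (hT : ∀ i ∈ T, i < r.length)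
    (hval : lastMaxRow (Pl m r) ∉ PS m T c) :
    (Pl m r, PS m T c) ∈ decPaths (m + r.length) := by
  rw [decPaths, Finset.mem_filter, Finset.mem_product]
  refine ⟨⟨?_, ?_⟩, isDyck_Pl hm hGr, ?_, hval⟩
  · rw [mem_allSeqs]
    refine ⟨Pl_length, fun i hi => ?_⟩
    show ent (Pl m r) i ≤ m + r.length
    have := (isDyck_Pl hm hGr).ent_le i (by rw [Pl_length]; omega)
    omega
  · rw [Finset.mem_powerset]
    exact PS_subset hm hT
  · intro i hi
    rw [Pl_length]
    exact Finset.mem_range.mp (PS_subset hm hT hi)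

lemma memQ_decPaths (hm : 2 ≤ m) (hGr : GoodRest r) (hT : ∀ i ∈ T, i < r.length)
    (hval : lastMaxRow (Ql m r) ∉ QS r.length m T c) :
    (Ql m r, QS r.length m T c) ∈ decPaths (r.length + (m - 1)) := by
  rw [decPaths, Finset.mem_filter, Finset.mem_product]
  refine ⟨⟨?_, ?_⟩, isDyck_Ql hm hGr, ?_, hval⟩
  · rw [mem_allSeqs]
    refine ⟨Ql_length, fun i hi => ?_⟩
    show ent (Ql m r) i ≤ r.length + (m - 1)
    have := (isDyck_Ql hm hGr).ent_le i (by rw [Ql_length]; omega)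
    omega
  · rw [Finset.mem_powerset]
    exact QS_subset hm hT
  · intro i hi
    rw [Ql_length]
    exact Finset.mem_range.mp (QS_subset hm hT hi)

end Maps

end DeltaCat

open DeltaCat

/-- Case 3 of Proposition 3.2: cyclic rotation is a bijection between ∘-decorated Dyck
paths of size `n = 1 + |β| + ℓ` with rise-touch composition `(1, β)`, `k` decorated
peaks, `ℓ` decorated double rises whose first row is a decorated double rise, and
∘-decorated Dyck paths of size `n - 1` with rise-touch composition `(β, 1)`, `k`
decorated peaks and `ℓ - 1` decorated double rises; it shifts `dinv_∘` by `ℓ(β)` and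
preserves `area_∘`. -/
theorem rotation_bijection_decorated_first_rise
    (k ℓ n : ℕ) (hℓ : 1 ≤ ℓ) (β : List ℕ) (hβ : ∀ x ∈ β, 0 < x)
    (hn : n = 1 + β.sum + ℓ) :
    ∃ Φ : {p : List ℕ × Finset ℕ // p ∈ decPaths n ∧
            riseTouch p.1 p.2 = 1 :: β ∧ (peakSet p.1 p.2).card = k ∧
            (riseSet p.1 p.2).card = ℓ ∧ IsRise p.1 0 ∧ 0 ∈ p.2} →
          {p : List ℕ × Finset ℕ // p ∈ decPaths (n - 1) ∧
            riseTouch p.1 p.2 = β ++ [1] ∧ (peakSet p.1 p.2).card = k ∧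
            (riseSet p.1 p.2).card = ℓ - 1},
      Function.Bijective Φ ∧
        ∀ p, dinvC p.1.1 p.1.2 = dinvC (Φ p).1.1 (Φ p).1.2 + β.length ∧
             areaC p.1.1 p.1.2 = areaC (Φ p).1.1 (Φ p).1.2 := by
  
  classical
  have hA : ∀ p : {p : List ℕ × Finset ℕ // p ∈ decPaths n ∧
      riseTouch p.1 p.2 = 1 :: β ∧ (peakSet p.1 p.2).card = k ∧
      (riseSet p.1 p.2).card = ℓ ∧ IsRise p.1 0 ∧ 0 ∈ p.2},
      (PhiMap p.1 ∈ decPaths (n - 1) ∧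
        riseTouch (PhiMap p.1).1 (PhiMap p.1).2 = β ++ [1] ∧
        (peakSet (PhiMap p.1).1 (PhiMap p.1).2).card = k ∧
        (riseSet (PhiMap p.1).1 (PhiMap p.1).2).card = ℓ - 1) ∧
      dinvC p.1.1 p.1.2 = dinvC (PhiMap p.1).1 (PhiMap p.1).2 + β.length ∧
      areaC p.1.1 p.1.2 = areaC (PhiMap p.1).1 (PhiMap p.1).2 ∧
      PsiMap (PhiMap p.1) = p.1 := by
    rintro ⟨⟨l, S⟩, hmem, hrt, hpk, hrs, hrise0, h0S⟩
    dsimp only at hrt hpk hrs hrise0 h0S ⊢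
    obtain ⟨m, r, T, c, hm, hGr, hT, hl, hs, hn'⟩ := structureA hmem hrt hrise0 h0S
    dsimp only at hl hs
    subst hl
    subst hs
    have hrtP := riseTouch_Pl (c := c) hm hGr hT
    rw [hrtP] at hrt
    have hβ' : riseTouch r T = β := ((List.cons.injEq _ _ _ _).mp hrt).2
    have hval : lastMaxRow (Pl m r) ∉ PS m T c := by
      rw [decPaths, Finset.mem_filter] at hmem
      exact hmem.2.2.2
    have hvalQ : lastMaxRow (Ql m r) ∉ QS r.length m T c :=
      fun h => hval ((lastMax_PQ hm hGr hT).mpr h)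
    have hβlen : (segStarts r).length = β.length := by
      rw [← hβ', length_riseTouch]
    rw [PhiMap_P hm hGr hT]
    dsimp only
    have hcP := card_riseSet_Pl (c := c) hm hGr hT
    rw [hrs] at hcP
    refine ⟨⟨?_, ?_, ?_, ?_⟩, ?_, areaC_PQ hm hGr hT, PsiMap_Q hm hGr hT⟩
    · have := memQ_decPaths hm hGr hT hvalQ
      rwa [show r.length + (m - 1) = n - 1 by omega] at this
    · rw [riseTouch_Ql hm hGr hT, hβ']
    · rw [← card_peakSet_eq hm hGr hT]
      exact hpk
    · rw [card_riseSet_Ql hm hT]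
      omega
    · rw [dinvC_PQ hm hGr hT]
      omega
  have hB : ∀ q : {p : List ℕ × Finset ℕ // p ∈ decPaths (n - 1) ∧
      riseTouch p.1 p.2 = β ++ [1] ∧ (peakSet p.1 p.2).card = k ∧
      (riseSet p.1 p.2).card = ℓ - 1},
      (PsiMap q.1 ∈ decPaths n ∧
        riseTouch (PsiMap q.1).1 (PsiMap q.1).2 = 1 :: β ∧
        (peakSet (PsiMap q.1).1 (PsiMap q.1).2).card = k ∧
        (riseSet (PsiMap q.1).1 (PsiMap q.1).2).card = ℓ ∧
        IsRise (PsiMap q.1).1 0 ∧ 0 ∈ (PsiMap q.1).2) ∧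
      PhiMap (PsiMap q.1) = q.1 := by
    rintro ⟨⟨l, S⟩, hmem, hrt, hpk, hrs⟩
    dsimp only at hrt hpk hrs ⊢
    obtain ⟨m, r, T, c, hm, hGr, hT, hl, hs, hn'⟩ := structureB hmem hrt
    dsimp only at hl hs
    subst hl
    subst hs
    have hrtQ := riseTouch_Ql (c := c) hm hGr hT
    rw [hrtQ] at hrt
    have hβ' : riseTouch r T = β := (List.append_left_inj _).mp hrt
    have hvalQ : lastMaxRow (Ql m r) ∉ QS r.length m T c := by
      rw [decPaths, Finset.mem_filter] at hmem
      exact hmem.2.2.2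
    have hvalP : lastMaxRow (Pl m r) ∉ PS m T c :=
      fun h => hvalQ ((lastMax_PQ hm hGr hT).mp h)
    have hnm : n = m + r.length := by omega
    rw [PsiMap_Q hm hGr hT]
    dsimp only
    have hcQ := card_riseSet_Ql (c := c) hm hT
    rw [hrs] at hcQ
    refine ⟨⟨?_, ?_, ?_, ?_, risePl_low hm (by omega), ?_⟩, PhiMap_P hm hGr hT⟩
    · have := memP_decPaths hm hGr hT hvalP
      rwa [← hnm] at this
    · rw [riseTouch_Pl hm hGr hT, hβ']
    · rw [card_peakSet_eq hm hGr hT]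
      exact hpk
    · rw [card_riseSet_Pl hm hGr hT]
      omega
    · rw [mem_PS hm]
      exact Or.inl (by omega)
  refine ⟨fun p => ⟨PhiMap p.1, (hA p).1⟩, ?_, fun p => ⟨(hA p).2.1, (hA p).2.2.1⟩⟩
  refine Function.bijective_iff_has_inverse.mpr
    ⟨fun q => ⟨PsiMap q.1, (hB q).1⟩, ?_, ?_⟩
  · intro p
    apply Subtype.ext
    exact (hA p).2.2.2
  · intro q
    apply Subtype.ext
    exact (hB q).2
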